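/- arXiv:2605.26852 — 7 statements merged into one kernel-verified Lean document; each statement's English description precedes it below -/
import Mathlib

section
/- Let p ≥ 1 be an integer, let N be a p-rooted almost-binary phylogenetic network on X, and let Z = (e_1, ..., e_m) be a maximal zig-zag trail of N that is a fence. Then a subset S ⊆ E(Z), encoded as the 0-1 string ⟨b_1 ... b_m⟩ with b_i = 1 iff e_i ∈ S, is B-admissible if and only if b_1 = b_m = 1 and the string contains neither '00' nor '111' as a contiguous substring. -/
open Finset

variable {V : Type} [DecidableEq V] [Fintype V]

/-- The vertex set of the digraph given by the edge set `E`. -/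
def verts (E : Finset (V × V)) : Finset V :=
  E.image Prod.fst ∪ E.image Prod.snd

/-- In-degree of `v` in the digraph with edge set `E`. -/
def indeg (E : Finset (V × V)) (v : V) : ℕ :=
  (E.filter fun e => e.2 = v).card

/-- Out-degree of `v` in the digraph with edge set `E`. -/
def outdeg (E : Finset (V × V)) (v : V) : ℕ :=
  (E.filter fun e => e.1 = v).card

/-- `E` is (the edge set of) a `p`-rooted almost-binary phylogenetic network on `X`:
a finite simple DAG with exactly `p` in-degree-0 vertices, each of out-degree 1 or 2 (the roots),
whose set of in-degree-1, out-degree-0 vertices is `X` (the leaves), and all of whose other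
vertices have in-degree and out-degree in `{1, 2}`. -/
structure IsPhyloNet (E : Finset (V × V)) (p : ℕ) (X : Finset V) : Prop where
  acyclic : ∀ v : V, ¬ Relation.TransGen (fun a b => (a, b) ∈ E) v v
  roots_card : ((verts E).filter fun v => indeg E v = 0).card = p
  root_outdeg : ∀ v ∈ verts E, indeg E v = 0 → outdeg E v = 1 ∨ outdeg E v = 2
  leaves_eq : (verts E).filter (fun v => indeg E v = 1 ∧ outdeg E v = 0) = X
  internal_deg : ∀ v ∈ verts E, indeg E v ≠ 0 → v ∉ X →
    (indeg E v = 1 ∨ indeg E v = 2) ∧ (outdeg E v = 1 ∨ outdeg E v = 2)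

/-- Two directed edges share a tail or share a head. -/
def Shares (e f : V × V) : Prop := e.1 = f.1 ∨ e.2 = f.2

/-- `S` is (the edge set of) a zig-zag trail of the digraph `E`: a subgraph with `m ≥ 1`
edges which can be ordered so that consecutive edges share a head or share a tail. -/
def IsZigzagTrail (E S : Finset (V × V)) : Prop :=
  S ⊆ E ∧ ∃ l : List (V × V), l ≠ [] ∧ l.Nodup ∧ l.toFinset = S ∧ l.Chain' Shares

/-- A maximal zig-zag trail: one that is not a proper subgraph of another zig-zag trail. -/
def IsMaximalZigzagTrail (E S : Finset (V × V)) : Prop :=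
  IsZigzagTrail E S ∧ ∀ S', IsZigzagTrail E S' → ¬ S ⊂ S'

/-- The `i`-th edge (0-indexed) of a zig-zag sequence on vertices `f 0, f 1, ...`;
when `down = true` the first edge descends (`f 0 > f 1`), and directions alternate. -/
def zigEdge (f : ℕ → V) (down : Bool) (i : ℕ) : V × V :=
  if decide (i % 2 = 0) = down then (f i, f (i + 1)) else (f (i + 1), f i)

/-- `S` consists of the `m` distinct edges of the zig-zag sequence on `f 0, ..., f m`. -/
def IsZigzagShape (S : Finset (V × V)) (m : ℕ) (f : ℕ → V) (down : Bool) : Prop :=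
  S = (Finset.range m).image (zigEdge f down) ∧
  ∀ i < m, ∀ j < m, zigEdge f down i = zigEdge f down j → i = j

/-- A crown: an even number `m` of edges written cyclically as `v₀ > v₁ < ⋯ < v_m = v₀`. -/
def IsCrown (S : Finset (V × V)) : Prop :=
  ∃ m f, 1 ≤ m ∧ m % 2 = 0 ∧ f m = f 0 ∧ IsZigzagShape S m f true

/-- An M-fence: a non-crown with an even number `m` of edges,
of the form `v₀ < v₁ > ⋯ > v_m ≠ v₀`. -/
def IsMFence (S : Finset (V × V)) : Prop :=
  ¬ IsCrown S ∧ ∃ m f, 1 ≤ m ∧ m % 2 = 0 ∧ f m ≠ f 0 ∧ IsZigzagShape S m f false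

/-- A W-fence: a non-crown with an even number `m` of edges,
of the form `v₀ > v₁ < ⋯ < v_m ≠ v₀`. -/
def IsWFence (S : Finset (V × V)) : Prop :=
  ¬ IsCrown S ∧ ∃ m f, 1 ≤ m ∧ m % 2 = 0 ∧ f m ≠ f 0 ∧ IsZigzagShape S m f true

/-- An N-fence: a non-crown with an odd number `m` of edges,
of the form `v₀ > v₁ < ⋯ > v_m`. -/
def IsNFence (S : Finset (V × V)) : Prop :=
  ¬ IsCrown S ∧ ∃ m f, m % 2 = 1 ∧ IsZigzagShape S m f true

/-- A support network of `N = (V, E)`: a spanning subgraph that is itself a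
`p`-rooted almost-binary phylogenetic network on `X` (identified with its edge set). -/
def IsSupportNet (E S : Finset (V × V)) (p : ℕ) (X : Finset V) : Prop :=
  S ⊆ E ∧ verts S = verts E ∧ IsPhyloNet S p X

/-- A minimal support network: no support network is a proper subgraph of it. -/
def IsMinimalSupportNet (E S : Finset (V × V)) (p : ℕ) (X : Finset V) : Prop :=
  IsSupportNet E S p X ∧ ∀ S', IsSupportNet E S' p X → ¬ S' ⊂ S

/-- A minimum support network: one with the fewest edges among all support networks. -/
def IsMinimumSupportNet (E S : Finset (V × V)) (p : ℕ) (X : Finset V) : Prop :=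
  IsSupportNet E S p X ∧ ∀ S', IsSupportNet E S' p X → S.card ≤ S'.card

/-- `S ⊆ Z` is A-admissible (degrees taken in the ambient network `E`):
(C1) `S` contains every edge `(u,v)` of `Z` with `outdeg u = 1` or `indeg v = 1`;
(C2) of any two distinct edges of `Z` sharing a tail or a head, `S` contains at least one. -/
def AAdmissible (E Z S : Finset (V × V)) : Prop :=
  S ⊆ Z ∧
  (∀ e ∈ Z, (outdeg E e.1 = 1 ∨ indeg E e.2 = 1) → e ∈ S) ∧
  (∀ e₁ ∈ Z, ∀ e₂ ∈ Z, e₁ ≠ e₂ → Shares e₁ e₂ → e₁ ∈ S ∨ e₂ ∈ S)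

/-- A B-admissible subset: an A-admissible subset none of whose proper subsets
is A-admissible. -/
def BAdmissible (E Z S : Finset (V × V)) : Prop :=
  AAdmissible E Z S ∧ ∀ S', S' ⊂ S → ¬ AAdmissible E Z S'

/-- A C-admissible subset: an A-admissible subset of minimum cardinality. -/
def CAdmissible (E Z S : Finset (V × V)) : Prop :=
  AAdmissible E Z S ∧ ∀ S', AAdmissible E Z S' → S.card ≤ S'.card

/-- One subdivision step: an edge `(u, v)` is replaced by `(u, w), (w, v)` for a fresh
vertex `w`. -/
def SubdivStep (T T' : Finset (V × V)) : Prop :=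
  ∃ u w v, (u, v) ∈ T ∧ w ∉ verts T ∧
    T' = insert (u, w) (insert (w, v) (T.erase (u, v)))

/-- `S` is a subdivision of `T` (zero or more subdivision steps). -/
def IsSubdivisionOf (S T : Finset (V × V)) : Prop :=
  Relation.ReflTransGen SubdivStep T S

/-- A rooted binary phylogenetic tree on `X`: a 1-rooted network on `X` in which every
non-root, non-leaf vertex has in-degree 1 and out-degree 2. -/
def IsBinaryPhyloTree (T : Finset (V × V)) (X : Finset V) : Prop :=
  IsPhyloNet T 1 X ∧
  ∀ v ∈ verts T, indeg T v ≠ 0 → v ∉ X → indeg T v = 1 ∧ outdeg T v = 2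

/-- `N = (V, E)` is tree-based: it has a support tree, i.e. a spanning subgraph that is a
subdivision of some rooted binary phylogenetic tree on `X`. -/
def IsTreeBased (E : Finset (V × V)) (X : Finset V) : Prop :=
  ∃ S T, S ⊆ E ∧ verts S = verts E ∧ IsBinaryPhyloTree T X ∧ IsSubdivisionOf S T

/-- The underlying undirected simple graph of the digraph with edge set `S`. -/
def usym (S : Finset (V × V)) : SimpleGraph V where
  Adj u v := u ≠ v ∧ ((u, v) ∈ S ∨ (v, u) ∈ S)
  symm := ⟨fun _ _ h => ⟨h.1.symm, h.2.symm⟩⟩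
  loopless := ⟨fun _ h => h.1 rfl⟩

/-- Two edges of `S` lie in a common block of the underlying undirected graph:
they are equal or lie on a common cycle. -/
def SameBlock (S : Finset (V × V)) (e f : V × V) : Prop :=
  e = f ∨ ∃ (a : V) (w : (usym S).Walk a a), w.IsCycle ∧
    s(e.1, e.2) ∈ w.edges ∧ s(f.1, f.2) ∈ w.edges

/-- The number of reticulations (in-degree-2 vertices) contained in the block of the
edge `e` of `S`. -/
noncomputable def blockReticCount (S : Finset (V × V)) (e : V × V) : ℕ :=
  Set.ncard {v : V | indeg S v = 2 ∧ ∃ f ∈ S, SameBlock S e f ∧ (f.1 = v ∨ f.2 = v)}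

/-- The level of the network with edge set `S`: the maximum number of reticulations
contained in a block. -/
noncomputable def level (S : Finset (V × V)) : ℕ :=
  S.sup (blockReticCount S)

/- ===== Auxiliary development for stmt10 ===== -/

lemma shares_symm {a b : V × V} (h : Shares a b) : Shares b a :=
  Or.imp Eq.symm Eq.symm h

lemma two_out {E : Finset (V × V)} {a b : V × V} (ha : a ∈ E) (hb : b ∈ E) (hab : a ≠ b)
    (h : a.1 = b.1) : 2 ≤ outdeg E a.1 :=
  Finset.one_lt_card.mpr ⟨a, mem_filter.mpr ⟨ha, rfl⟩, b, mem_filter.mpr ⟨hb, h.symm⟩, hab⟩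

lemma two_in {E : Finset (V × V)} {a b : V × V} (ha : a ∈ E) (hb : b ∈ E) (hab : a ≠ b)
    (h : a.2 = b.2) : 2 ≤ indeg E a.2 :=
  Finset.one_lt_card.mpr ⟨a, mem_filter.mpr ⟨ha, rfl⟩, b, mem_filter.mpr ⟨hb, h.symm⟩, hab⟩

lemma three_out {E : Finset (V × V)} (hdeg : ∀ v, outdeg E v ≤ 2 ∧ indeg E v ≤ 2)
    {a b c : V × V} (ha : a ∈ E) (hb : b ∈ E) (hc : c ∈ E)
    (hab : a ≠ b) (hac : a ≠ c) (hbc : b ≠ c)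
    (h1 : a.1 = b.1) (h2 : a.1 = c.1) : False := by
  have hsub : ({a, b, c} : Finset (V × V)) ⊆ E.filter (fun x => x.1 = a.1) := by
    intro x hx
    simp only [mem_insert, mem_singleton] at hx
    rcases hx with rfl | rfl | rfl
    · exact mem_filter.mpr ⟨ha, rfl⟩
    · exact mem_filter.mpr ⟨hb, h1.symm⟩
    · exact mem_filter.mpr ⟨hc, h2.symm⟩
  have hcard : ({a, b, c} : Finset (V × V)).card = 3 := by
    rw [card_insert_of_notMem (by simp [hab, hac]), card_insert_of_notMem (by simp [hbc]),
      card_singleton]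
  have h3 : 3 ≤ outdeg E a.1 := by
    rw [outdeg, ← hcard]; exact card_le_card hsub
  have := (hdeg a.1).1
  omega

lemma three_in {E : Finset (V × V)} (hdeg : ∀ v, outdeg E v ≤ 2 ∧ indeg E v ≤ 2)
    {a b c : V × V} (ha : a ∈ E) (hb : b ∈ E) (hc : c ∈ E)
    (hab : a ≠ b) (hac : a ≠ c) (hbc : b ≠ c)
    (h1 : a.2 = b.2) (h2 : a.2 = c.2) : False := by
  have hsub : ({a, b, c} : Finset (V × V)) ⊆ E.filter (fun x => x.2 = a.2) := by
    intro x hx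
    simp only [mem_insert, mem_singleton] at hx
    rcases hx with rfl | rfl | rfl
    · exact mem_filter.mpr ⟨ha, rfl⟩
    · exact mem_filter.mpr ⟨hb, h1.symm⟩
    · exact mem_filter.mpr ⟨hc, h2.symm⟩
  have hcard : ({a, b, c} : Finset (V × V)).card = 3 := by
    rw [card_insert_of_notMem (by simp [hab, hac]), card_insert_of_notMem (by simp [hbc]),
      card_singleton]
  have h3 : 3 ≤ indeg E a.2 := by
    rw [indeg, ← hcard]; exact card_le_card hsub
  have := (hdeg a.2).2
  omega

lemma deg_le_two {E : Finset (V × V)} {p : ℕ} {X : Finset V} (hN : IsPhyloNet E p X) (v : V) :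
    outdeg E v ≤ 2 ∧ indeg E v ≤ 2 := by
  by_cases hv : v ∈ verts E
  · by_cases hi : indeg E v = 0
    · have := hN.root_outdeg v hv hi
      omega
    · by_cases hx : v ∈ X
      · rw [← hN.leaves_eq, mem_filter] at hx
        omega
      · have := hN.internal_deg v hv hi hx
        omega
  · have ho : outdeg E v = 0 := by
      rw [outdeg, Finset.card_eq_zero, Finset.filter_eq_empty_iff]
      intro x hx hx1
      exact hv (show v ∈ E.image Prod.fst ∪ E.image Prod.snd from
        mem_union_left _ (mem_image.mpr ⟨x, hx, hx1⟩))
    have hi : indeg E v = 0 := by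
      rw [indeg, Finset.card_eq_zero, Finset.filter_eq_empty_iff]
      intro x hx hx2
      exact hv (show v ∈ E.image Prod.fst ∪ E.image Prod.snd from
        mem_union_right _ (mem_image.mpr ⟨x, hx, hx2⟩))
    omega

lemma zz {E : Finset (V × V)} {n : ℕ} (hn : 1 ≤ n) (g : ℕ → V × V)
    (hsub : ∀ i < n, g i ∈ E)
    (hgchain : ∀ i, i + 1 < n → Shares (g i) (g (i + 1)))
    (hginj : ∀ i < n, ∀ j < n, g i = g j → i = j) :
    IsZigzagTrail E ((range n).image g) := by
  refine ⟨?_, (List.range n).map g, ?_, ?_, ?_, ?_⟩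
  · intro x hx
    rw [mem_image] at hx
    obtain ⟨i, hi, rfl⟩ := hx
    exact hsub i (mem_range.mp hi)
  · simp only [ne_eq, List.map_eq_nil_iff, List.range_eq_nil]
    omega
  · exact List.Nodup.map_on
      (fun x hx y hy h => hginj x (List.mem_range.mp hx) y (List.mem_range.mp hy) h)
      List.nodup_range
  · ext x; simp
  · obtain ⟨n', rfl⟩ : ∃ n', n = n' + 1 := ⟨n - 1, by omega⟩
    show List.IsChain Shares ((List.range (n' + 1)).map g)
    rw [List.isChain_map, List.isChain_range_succ]
    intro i hi
    exact hgchain i (by omega)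

lemma alt_parity {m : ℕ} {P Q : ℕ → Prop}
    (hPQ : ∀ i, i + 1 < m → P i ∨ Q i)
    (hP : ∀ i, i + 2 < m → P i → P (i + 1) → False)
    (hQ : ∀ i, i + 2 < m → Q i → Q (i + 1) → False)
    (h0 : P 0) : ∀ i, i + 1 < m → (P i ↔ i % 2 = 0) := by
  intro i
  induction i with
  | zero => exact fun _ => iff_of_true h0 rfl
  | succ n ih =>
    intro h
    have hn := ih (by omega)
    constructor
    · intro hp
      have h1 : ¬ P n := fun hpn => hP n (by omega) hpn hp
      have h2 : ¬ n % 2 = 0 := fun hq => h1 (hn.mpr hq)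
      omega
    · intro hp
      have hnodd : ¬ n % 2 = 0 := by omega
      have h1 : ¬ P n := fun h' => hnodd (hn.mp h')
      have hq : Q n := (hPQ n (by omega)).resolve_left h1
      have h2 : ¬ Q (n + 1) := fun h' => hQ n (by omega) hq h'
      exact (hPQ (n + 1) h).resolve_right h2

lemma crown_tail {m : ℕ} (e : ℕ → V × V) {Z : Finset (V × V)}
    (hZdef : Z = (Finset.range m).image e)
    (hinj : ∀ i < m, ∀ j < m, e i = e j → i = j)
    (hchain : ∀ i, i + 1 < m → Shares (e i) (e (i + 1)))
    (h3 : 3 ≤ m) (hm2 : m % 2 = 0)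
    (hT : (e 0).1 = (e (m - 1)).1)
    (hpar : ∀ i, i + 1 < m → ((e i).2 = (e (i + 1)).2 ↔ i % 2 = 0)) :
    IsCrown Z := by
  set f : ℕ → V := fun j => if j = m then (e 0).1 else if j % 2 = 0 then (e j).1 else (e j).2
    with hfdef
  have hfm : f m = (e 0).1 := by simp [hfdef]
  have hfe : ∀ j < m, f j = if j % 2 = 0 then (e j).1 else (e j).2 := by
    intro j hj; simp [hfdef, Nat.ne_of_lt hj]
  have key : ∀ i < m, zigEdge f true i = e i := by
    intro i hi
    rcases Nat.even_or_odd i with he | ho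
    · have h2 : i % 2 = 0 := Nat.even_iff.mp he
      have hi1 : i + 1 < m := by omega
      have ha : f i = (e i).1 := by rw [hfe i hi]; simp [h2]
      have hb : f (i + 1) = (e i).2 := by
        rw [hfe (i + 1) hi1]
        rw [if_neg (by omega : ¬ (i + 1) % 2 = 0)]
        exact ((hpar i hi1).mpr h2).symm
      simp [zigEdge, h2, ha, hb]
    · have h2 : i % 2 = 1 := Nat.odd_iff.mp ho
      have ha : f i = (e i).2 := by rw [hfe i hi]; simp [h2]
      have hb : f (i + 1) = (e i).1 := by
        by_cases him : i + 1 = m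
        · rw [him, hfm, hT, show m - 1 = i by omega]
        · have hi1 : i + 1 < m := by omega
          rw [hfe (i + 1) hi1, if_pos (by omega : (i + 1) % 2 = 0)]
          have hsT : (e i).1 = (e (i + 1)).1 := by
            rcases hchain i hi1 with h | h
            · exact h
            · exact absurd ((hpar i hi1).mp h) (by omega)
          exact hsT.symm
      simp [zigEdge, h2, ha, hb]
  refine ⟨m, f, by omega, hm2, ?_, ?_, ?_⟩
  · rw [hfm, hfe 0 (by omega)]; simp
  · rw [hZdef]
    exact (Finset.image_congr fun x hx => (key x (by simpa using hx))).symm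
  · intro i hi j hj hij
    exact hinj i hi j hj (by rwa [key i hi, key j hj] at hij)

lemma crown_head {m : ℕ} (e : ℕ → V × V) {Z : Finset (V × V)}
    (hZdef : Z = (Finset.range m).image e)
    (hinj : ∀ i < m, ∀ j < m, e i = e j → i = j)
    (hchain : ∀ i, i + 1 < m → Shares (e i) (e (i + 1)))
    (h3 : 3 ≤ m) (hm2 : m % 2 = 0)
    (hH : (e 0).2 = (e (m - 1)).2)
    (hpar : ∀ i, i + 1 < m → ((e i).1 = (e (i + 1)).1 ↔ i % 2 = 0)) :
    IsCrown Z := by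
  set σ : ℕ → ℕ := fun j => (m - j % m) % m with hσdef
  have hσ0 : σ 0 = 0 := by simp [hσdef]
  have hσm : σ m = 0 := by simp [hσdef]
  have hσlt : ∀ j, 0 < j → j < m → σ j = m - j := by
    intro j h0 hj
    simp only [hσdef]
    rw [Nat.mod_eq_of_lt hj, Nat.mod_eq_of_lt (by omega)]
  have hσlt' : ∀ j < m, σ j < m := by
    intro j hj
    rcases Nat.eq_zero_or_pos j with rfl | h0
    · rw [hσ0]; omega
    · rw [hσlt j h0 hj]; omega
  set f : ℕ → V := fun j => if j % 2 = 0 then (e (σ j)).1 else (e (σ j)).2 with hfdef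
  have hsT : ∀ i, i + 1 < m → i % 2 = 0 → (e i).1 = (e (i + 1)).1 :=
    fun i h1 h2 => (hpar i h1).mpr h2
  have hsH : ∀ i, i + 1 < m → i % 2 = 1 → (e i).2 = (e (i + 1)).2 := by
    intro i h1 h2
    rcases hchain i h1 with h | h
    · exact absurd ((hpar i h1).mp h) (by omega)
    · exact h
  have key : ∀ j < m, zigEdge f true j = e (σ j) := by
    intro j hj
    rcases Nat.even_or_odd j with he | ho
    · have h2 : j % 2 = 0 := Nat.even_iff.mp he
      have hj1 : j + 1 < m := by omega
      have ha : f j = (e (σ j)).1 := by simp [hfdef, h2]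
      have hb : f (j + 1) = (e (σ j)).2 := by
        have hodd : ¬ (j + 1) % 2 = 0 := by omega
        have hfj : f (j + 1) = (e (σ (j + 1))).2 := by simp [hfdef, hodd]
        rw [hfj]
        rcases Nat.eq_zero_or_pos j with rfl | h0
        · rw [hσ0, hσlt 1 (by omega) (by omega)]
          exact hH.symm
        · rw [hσlt j h0 hj, hσlt (j + 1) (by omega) hj1]
          have hthis := hsH (m - j - 1) (by omega) (by omega)
          rw [show m - j - 1 + 1 = m - j by omega] at hthis
          rw [show m - (j + 1) = m - j - 1 by omega]
          exact hthis
      simp [zigEdge, h2, ha, hb]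
    · have h2 : j % 2 = 1 := Nat.odd_iff.mp ho
      have ha : f j = (e (σ j)).2 := by simp [hfdef, h2]
      have hb : f (j + 1) = (e (σ j)).1 := by
        by_cases hjm : j + 1 = m
        · have hfj : f (j + 1) = (e 0).1 := by
            rw [hjm]; simp [hfdef, hσm, hm2]
          rw [hfj, hσlt j (by omega) hj, show m - j = 1 by omega]
          exact hsT 0 (by omega) (by omega)
        · have hj1 : j + 1 < m := by omega
          have hfj : f (j + 1) = (e (σ (j + 1))).1 := by
            simp [hfdef, (by omega : (j + 1) % 2 = 0)]
          rw [hfj, hσlt (j + 1) (by omega) hj1, hσlt j (by omega) hj]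
          have hthis := hsT (m - j - 1) (by omega) (by omega)
          rw [show m - j - 1 + 1 = m - j by omega] at hthis
          rw [show m - (j + 1) = m - j - 1 by omega]
          exact hthis
      simp [zigEdge, h2, ha, hb]
  have hσσ : ∀ k < m, σ ((m - k) % m) = k := by
    intro k hk
    rcases Nat.eq_zero_or_pos k with rfl | h0
    · rw [Nat.sub_zero, Nat.mod_self, hσ0]
    · rw [Nat.mod_eq_of_lt (by omega), hσlt (m - k) (by omega) (by omega)]
      omega
  refine ⟨m, f, by omega, hm2, ?_, ?_, ?_⟩
  · have h1 : f m = (e 0).1 := by simp [hfdef, hσm, hm2]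
    have h2 : f 0 = (e 0).1 := by simp [hfdef, hσ0]
    rw [h1, h2]
  · rw [hZdef]
    apply Finset.Subset.antisymm
    · intro x hx
      rw [mem_image] at hx
      obtain ⟨k, hk, rfl⟩ := hx
      have hk' := mem_range.mp hk
      rw [mem_image]
      refine ⟨(m - k) % m, mem_range.mpr (Nat.mod_lt _ (by omega)), ?_⟩
      rw [key _ (Nat.mod_lt _ (by omega)), hσσ k hk']
    · intro x hx
      rw [mem_image] at hx
      obtain ⟨j, hj, rfl⟩ := hx
      have hj' := mem_range.mp hj
      rw [mem_image]
      exact ⟨σ j, mem_range.mpr (hσlt' j hj'), (key j hj').symm⟩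
  · intro i hi j hj hij
    rw [key i hi, key j hj] at hij
    have hs := hinj _ (hσlt' i hi) _ (hσlt' j hj) hij
    rcases Nat.eq_zero_or_pos i with rfl | hi0 <;> rcases Nat.eq_zero_or_pos j with rfl | hj0
    · rfl
    · rw [hσ0, hσlt j hj0 hj] at hs; omega
    · rw [hσlt i hi0 hi, hσ0] at hs; omega
    · rw [hσlt i hi0 hi, hσlt j hj0 hj] at hs; omega

structure ZCtx (V : Type) [DecidableEq V] where
  E : Finset (V × V)
  m : ℕ
  e : ℕ → V × V
  Z : Finset (V × V)
  hm : 1 ≤ m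
  hZdef : Z = (Finset.range m).image e
  hinj : ∀ i < m, ∀ j < m, e i = e j → i = j
  hchain : ∀ i, i + 1 < m → Shares (e i) (e (i + 1))
  hmax : IsMaximalZigzagTrail E Z
  hfence : ¬ IsCrown Z
  hdeg : ∀ v, outdeg E v ≤ 2 ∧ indeg E v ≤ 2

namespace ZCtx

variable {V : Type} [DecidableEq V] [Fintype V] (c : ZCtx V)

lemma memZ {i : ℕ} (hi : i < c.m) : c.e i ∈ c.Z := by
  rw [c.hZdef]; exact mem_image_of_mem _ (mem_range.mpr hi)

lemma memE {i : ℕ} (hi : i < c.m) : c.e i ∈ c.E := c.hmax.1.1 (c.memZ hi)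

lemma ene {i j : ℕ} (hi : i < c.m) (hj : j < c.m) (hne : i ≠ j) : c.e i ≠ c.e j :=
  fun h => hne (c.hinj i hi j hj h)

lemma sTorH {i : ℕ} (hi : i + 1 < c.m) :
    (c.e i).1 = (c.e (i + 1)).1 ∨ (c.e i).2 = (c.e (i + 1)).2 := c.hchain i hi

lemma three_t {i j k : ℕ} (hi : i < c.m) (hj : j < c.m) (hk : k < c.m)
    (hij : i ≠ j) (hik : i ≠ k) (hjk : j ≠ k)
    (h1 : (c.e i).1 = (c.e j).1) (h2 : (c.e i).1 = (c.e k).1) : False :=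
  three_out c.hdeg (c.memE hi) (c.memE hj) (c.memE hk) (c.ene hi hj hij) (c.ene hi hk hik)
    (c.ene hj hk hjk) h1 h2

lemma three_h {i j k : ℕ} (hi : i < c.m) (hj : j < c.m) (hk : k < c.m)
    (hij : i ≠ j) (hik : i ≠ k) (hjk : j ≠ k)
    (h1 : (c.e i).2 = (c.e j).2) (h2 : (c.e i).2 = (c.e k).2) : False :=
  three_in c.hdeg (c.memE hi) (c.memE hj) (c.memE hk) (c.ene hi hj hij) (c.ene hi hk hik)
    (c.ene hj hk hjk) h1 h2

lemma mem_of_shares_e0 {f : V × V} (hf : f ∈ c.E) (hsh : Shares f (c.e 0)) : f ∈ c.Z := by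
  by_contra hfZ
  set g : ℕ → V × V := fun i => if i = 0 then f else c.e (i - 1) with hg
  have hg0 : g 0 = f := by simp [hg]
  have hgs : ∀ i, g (i + 1) = c.e i := by intro i; simp [hg]
  have htrail : IsZigzagTrail c.E ((range (c.m + 1)).image g) := by
    apply zz (by omega)
    · intro i hi
      rcases Nat.eq_zero_or_pos i with rfl | hpos
      · rwa [hg0]
      · obtain ⟨i', rfl⟩ : ∃ i', i = i' + 1 := ⟨i - 1, by omega⟩
        rw [hgs]
        exact c.memE (by omega)
    · intro i hi
      rcases Nat.eq_zero_or_pos i with rfl | hpos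
      · rw [hg0, hgs]; exact hsh
      · obtain ⟨i', rfl⟩ : ∃ i', i = i' + 1 := ⟨i - 1, by omega⟩
        rw [hgs, hgs]
        exact c.hchain i' (by omega)
    · intro i hi j hj hij
      rcases Nat.eq_zero_or_pos i with rfl | hpos <;> rcases Nat.eq_zero_or_pos j with rfl | hpos'
      · rfl
      · obtain ⟨j', rfl⟩ : ∃ j', j = j' + 1 := ⟨j - 1, by omega⟩
        rw [hg0, hgs] at hij
        exact absurd (hij ▸ c.memZ (show j' < c.m by omega)) hfZ
      · obtain ⟨i', rfl⟩ : ∃ i', i = i' + 1 := ⟨i - 1, by omega⟩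
        rw [hg0, hgs] at hij
        exact absurd (hij ▸ c.memZ (show i' < c.m by omega)) hfZ
      · obtain ⟨i', rfl⟩ : ∃ i', i = i' + 1 := ⟨i - 1, by omega⟩
        obtain ⟨j', rfl⟩ : ∃ j', j = j' + 1 := ⟨j - 1, by omega⟩
        rw [hgs, hgs] at hij
        have := c.hinj i' (by omega) j' (by omega) hij
        omega
  have hZsub : c.Z ⊆ (range (c.m + 1)).image g := by
    intro x hx
    rw [c.hZdef, mem_image] at hx
    obtain ⟨i, hi, rfl⟩ := hx
    rw [mem_image]
    exact ⟨i + 1, mem_range.mpr (by have := mem_range.mp hi; omega), hgs i⟩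
  have hss : c.Z ⊂ (range (c.m + 1)).image g :=
    (Finset.ssubset_iff_of_subset hZsub).mpr
      ⟨f, mem_image.mpr ⟨0, mem_range.mpr (by omega), hg0⟩, hfZ⟩
  exact c.hmax.2 _ htrail hss

lemma adj_lt {i j : ℕ} (hj : j < c.m) (hij : i < j) (hsh : Shares (c.e i) (c.e j)) :
    j = i + 1 := by
  by_contra hnej
  have hij2 : i + 2 ≤ j := by omega
  rcases hsh with ht | hh
  · -- tail share
    have hTi : ¬ (c.e i).1 = (c.e (i + 1)).1 := fun h =>
      c.three_t (i := i) (j := i + 1) (k := j) (by omega) (by omega) hj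
        (by omega) (by omega) (by omega) h ht
    have hHi : (c.e i).2 = (c.e (i + 1)).2 := (c.sTorH (by omega)).resolve_left hTi
    have hi0 : i = 0 := by
      by_contra h0
      obtain ⟨i', rfl⟩ : ∃ i', i = i' + 1 := ⟨i - 1, by omega⟩
      have hTi' : ¬ (c.e i').1 = (c.e (i' + 1)).1 := fun h =>
        c.three_t (i := i' + 1) (j := i') (k := j) (by omega) (by omega) hj
          (by omega) (by omega) (by omega) h.symm ht
      have hHi' := (c.sTorH (i := i') (by omega)).resolve_left hTi'
      exact c.three_h (i := i' + 1) (j := i') (k := i' + 2) (by omega) (by omega) (by omega)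
        (by omega) (by omega) (by omega) hHi'.symm hHi
    subst hi0
    obtain ⟨j', rfl⟩ : ∃ j', j = j' + 1 := ⟨j - 1, by omega⟩
    have hTj : ¬ (c.e j').1 = (c.e (j' + 1)).1 := fun h =>
      c.three_t (i := j' + 1) (j := j') (k := 0) hj (by omega) (by omega)
        (by omega) (by omega) (by omega) h.symm ht.symm
    have hHj := (c.sTorH (i := j') (by omega)).resolve_left hTj
    have hjm : j' + 1 = c.m - 1 := by
      by_contra hjm
      have hj2 : j' + 2 < c.m := by omega
      have hTj2 : ¬ (c.e (j' + 1)).1 = (c.e (j' + 2)).1 := fun h =>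
        c.three_t (i := j' + 1) (j := j' + 2) (k := 0) (by omega) (by omega) (by omega)
          (by omega) (by omega) (by omega) h ht.symm
      have hHj2 := (c.sTorH (i := j' + 1) hj2).resolve_left hTj2
      exact c.three_h (i := j' + 1) (j := j') (k := j' + 2) (by omega) (by omega) (by omega)
        (by omega) (by omega) (by omega) hHj.symm hHj2
    have hpar : ∀ k, k + 1 < c.m → ((c.e k).2 = (c.e (k + 1)).2 ↔ k % 2 = 0) := by
      refine alt_parity (P := fun k => (c.e k).2 = (c.e (k + 1)).2)
        (Q := fun k => (c.e k).1 = (c.e (k + 1)).1) (fun k hk => (c.sTorH hk).symm)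
        (fun k hk h1 h2 => c.three_h (i := k + 1) (j := k) (k := k + 2) (by omega) (by omega)
          (by omega) (by omega) (by omega) (by omega) h1.symm h2)
        (fun k hk h1 h2 => c.three_t (i := k + 1) (j := k) (k := k + 2) (by omega) (by omega)
          (by omega) (by omega) (by omega) (by omega) h1.symm h2)
        hHi
    have hj'm : j' = c.m - 2 := by omega
    subst hj'm
    have hmev : c.m % 2 = 0 := by
      have := (hpar (c.m - 2) (by omega)).mp hHj
      omega
    have hT' : (c.e 0).1 = (c.e (c.m - 1)).1 := by
      rw [show c.m - 1 = c.m - 2 + 1 by omega]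
      exact ht
    exact c.hfence (crown_tail c.e c.hZdef c.hinj c.hchain (by omega) hmev hT' hpar)
  · -- head share
    have hHi : ¬ (c.e i).2 = (c.e (i + 1)).2 := fun h =>
      c.three_h (i := i) (j := i + 1) (k := j) (by omega) (by omega) hj
        (by omega) (by omega) (by omega) h hh
    have hTi : (c.e i).1 = (c.e (i + 1)).1 := (c.sTorH (by omega)).resolve_right hHi
    have hi0 : i = 0 := by
      by_contra h0
      obtain ⟨i', rfl⟩ : ∃ i', i = i' + 1 := ⟨i - 1, by omega⟩
      have hHi' : ¬ (c.e i').2 = (c.e (i' + 1)).2 := fun h =>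
        c.three_h (i := i' + 1) (j := i') (k := j) (by omega) (by omega) hj
          (by omega) (by omega) (by omega) h.symm hh
      have hTi' := (c.sTorH (i := i') (by omega)).resolve_right hHi'
      exact c.three_t (i := i' + 1) (j := i') (k := i' + 2) (by omega) (by omega) (by omega)
        (by omega) (by omega) (by omega) hTi'.symm hTi
    subst hi0
    obtain ⟨j', rfl⟩ : ∃ j', j = j' + 1 := ⟨j - 1, by omega⟩
    have hHj : ¬ (c.e j').2 = (c.e (j' + 1)).2 := fun h =>
      c.three_h (i := j' + 1) (j := j') (k := 0) hj (by omega) (by omega)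
        (by omega) (by omega) (by omega) h.symm hh.symm
    have hTj := (c.sTorH (i := j') (by omega)).resolve_right hHj
    have hjm : j' + 1 = c.m - 1 := by
      by_contra hjm
      have hj2 : j' + 2 < c.m := by omega
      have hHj2 : ¬ (c.e (j' + 1)).2 = (c.e (j' + 2)).2 := fun h =>
        c.three_h (i := j' + 1) (j := j' + 2) (k := 0) (by omega) (by omega) (by omega)
          (by omega) (by omega) (by omega) h hh.symm
      have hTj2 := (c.sTorH (i := j' + 1) hj2).resolve_right hHj2
      exact c.three_t (i := j' + 1) (j := j') (k := j' + 2) (by omega) (by omega) (by omega)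
        (by omega) (by omega) (by omega) hTj.symm hTj2
    have hpar : ∀ k, k + 1 < c.m → ((c.e k).1 = (c.e (k + 1)).1 ↔ k % 2 = 0) := by
      refine alt_parity (P := fun k => (c.e k).1 = (c.e (k + 1)).1)
        (Q := fun k => (c.e k).2 = (c.e (k + 1)).2) (fun k hk => c.sTorH hk)
        (fun k hk h1 h2 => c.three_t (i := k + 1) (j := k) (k := k + 2) (by omega) (by omega)
          (by omega) (by omega) (by omega) (by omega) h1.symm h2)
        (fun k hk h1 h2 => c.three_h (i := k + 1) (j := k) (k := k + 2) (by omega) (by omega)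
          (by omega) (by omega) (by omega) (by omega) h1.symm h2)
        hTi
    have hj'm : j' = c.m - 2 := by omega
    subst hj'm
    have hmev : c.m % 2 = 0 := by
      have := (hpar (c.m - 2) (by omega)).mp hTj
      omega
    have hH' : (c.e 0).2 = (c.e (c.m - 1)).2 := by
      rw [show c.m - 1 = c.m - 2 + 1 by omega]
      exact hh
    exact c.hfence (crown_head c.e c.hZdef c.hinj c.hchain (by omega) hmev hH' hpar)

lemma adj {i j : ℕ} (hi : i < c.m) (hj : j < c.m) (hsh : Shares (c.e i) (c.e j)) :
    i = j ∨ i + 1 = j ∨ j + 1 = i := by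
  rcases lt_trichotomy i j with h | h | h
  · exact Or.inr (Or.inl (c.adj_lt hj h hsh).symm)
  · exact Or.inl h
  · exact Or.inr (Or.inr (c.adj_lt hi h (shares_symm hsh)).symm)

lemma interior {i : ℕ} (h1 : 1 ≤ i) (h2 : i + 1 < c.m) :
    2 ≤ outdeg c.E (c.e i).1 ∧ 2 ≤ indeg c.E (c.e i).2 := by
  obtain ⟨i', rfl⟩ : ∃ i', i = i' + 1 := ⟨i - 1, by omega⟩
  have hprev := c.sTorH (i := i') (by omega)
  have hnext := c.sTorH (i := i' + 1) h2
  have hT : (c.e (i' + 1)).1 = (c.e i').1 ∨ (c.e (i' + 1)).1 = (c.e (i' + 2)).1 := by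
    rcases hprev with h | h
    · exact Or.inl h.symm
    · rcases hnext with h' | h'
      · exact Or.inr h'
      · exact (c.three_h (i := i' + 1) (j := i') (k := i' + 2) (by omega)
          (by omega) h2 (by omega) (by omega) (by omega) h.symm h').elim
  have hH : (c.e (i' + 1)).2 = (c.e i').2 ∨ (c.e (i' + 1)).2 = (c.e (i' + 2)).2 := by
    rcases hprev with h | h
    · rcases hnext with h' | h'
      · exact (c.three_t (i := i' + 1) (j := i') (k := i' + 2) (by omega)
          (by omega) h2 (by omega) (by omega) (by omega) h.symm h').elim
      · exact Or.inr h'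
    · exact Or.inl h.symm
  constructor
  · rcases hT with h | h
    · exact two_out (c.memE (show i' + 1 < c.m by omega)) (c.memE (show i' < c.m by omega))
        (c.ene (by omega) (by omega) (by omega)) h
    · exact two_out (c.memE (show i' + 1 < c.m by omega)) (c.memE h2)
        (c.ene (by omega) h2 (by omega)) h
  · rcases hH with h | h
    · exact two_in (c.memE (show i' + 1 < c.m by omega)) (c.memE (show i' < c.m by omega))
        (c.ene (by omega) (by omega) (by omega)) h
    · exact two_in (c.memE (show i' + 1 < c.m by omega)) (c.memE h2)
        (c.ene (by omega) h2 (by omega)) h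

lemma force0 : outdeg c.E (c.e 0).1 = 1 ∨ indeg c.E (c.e 0).2 = 1 := by
  by_contra hcon
  push_neg at hcon
  obtain ⟨h1, h2⟩ := hcon
  have he0 : c.e 0 ∈ c.E := c.memE c.hm
  have ho1 : 1 ≤ outdeg c.E (c.e 0).1 :=
    Finset.card_pos.mpr ⟨c.e 0, mem_filter.mpr ⟨he0, rfl⟩⟩
  have hi1 : 1 ≤ indeg c.E (c.e 0).2 :=
    Finset.card_pos.mpr ⟨c.e 0, mem_filter.mpr ⟨he0, rfl⟩⟩
  have ho2 : 1 < (c.E.filter fun x => x.1 = (c.e 0).1).card := by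
    have hups := (c.hdeg (c.e 0).1).1
    have heq : outdeg c.E (c.e 0).1 = (c.E.filter fun x => x.1 = (c.e 0).1).card := rfl
    omega
  have hi2 : 1 < (c.E.filter fun x => x.2 = (c.e 0).2).card := by
    have hups := (c.hdeg (c.e 0).2).2
    have heq : indeg c.E (c.e 0).2 = (c.E.filter fun x => x.2 = (c.e 0).2).card := rfl
    omega
  obtain ⟨f, hfmem, hfne⟩ := Finset.exists_mem_ne ho2 (c.e 0)
  rw [mem_filter] at hfmem
  have hfZ := c.mem_of_shares_e0 hfmem.1 (Or.inl hfmem.2)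
  rw [c.hZdef, mem_image] at hfZ
  obtain ⟨j, hjr, hje⟩ := hfZ
  have hjm := mem_range.mp hjr
  have hj0 : j ≠ 0 := by rintro rfl; exact hfne hje.symm
  have hj1 : j = 1 := by
    have := c.adj (show 0 < c.m from c.hm) hjm (Or.inl (hje ▸ hfmem.2).symm)
    omega
  subst hj1
  have hsT0 : (c.e 0).1 = (c.e 1).1 := (hje ▸ hfmem.2).symm
  obtain ⟨g', hgmem, hgne⟩ := Finset.exists_mem_ne hi2 (c.e 0)
  rw [mem_filter] at hgmem
  have hgZ := c.mem_of_shares_e0 hgmem.1 (Or.inr hgmem.2)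
  rw [c.hZdef, mem_image] at hgZ
  obtain ⟨k, hkr, hke⟩ := hgZ
  have hkm := mem_range.mp hkr
  have hk0 : k ≠ 0 := by rintro rfl; exact hgne hke.symm
  have hk1 : k = 1 := by
    have := c.adj (show 0 < c.m from c.hm) hkm (Or.inr (hke ▸ hgmem.2).symm)
    omega
  subst hk1
  have hsH0 : (c.e 0).2 = (c.e 1).2 := (hke ▸ hgmem.2).symm
  exact c.ene c.hm hjm (by omega) (Prod.ext_iff.mpr ⟨hsT0, hsH0⟩)

def reverse : ZCtx V where
  E := c.E
  m := c.m
  e := fun i => c.e (c.m - 1 - i)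
  Z := c.Z
  hm := c.hm
  hZdef := by
    rw [c.hZdef]
    ext x
    simp only [mem_image, mem_range]
    constructor
    · rintro ⟨i, hi, rfl⟩
      refine ⟨c.m - 1 - i, by omega, ?_⟩
      rw [show c.m - 1 - (c.m - 1 - i) = i by omega]
    · rintro ⟨i, hi, rfl⟩
      exact ⟨c.m - 1 - i, by omega, rfl⟩
  hinj := by
    intro i hi j hj h
    have := c.hinj (c.m - 1 - i) (by omega) (c.m - 1 - j) (by omega) h
    omega
  hchain := by
    intro i hi
    have h1 : c.m - 1 - i = (c.m - 2 - i) + 1 := by omega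
    have h2 : c.m - 1 - (i + 1) = c.m - 2 - i := by omega
    show Shares (c.e (c.m - 1 - i)) (c.e (c.m - 1 - (i + 1)))
    rw [h1, h2]
    exact shares_symm (c.hchain (c.m - 2 - i) (by omega))
  hmax := c.hmax
  hfence := c.hfence
  hdeg := c.hdeg

end ZCtx
/-- For a fence `Z = (e₁, ..., e_m)`, a subset `S ⊆ E(Z)` is B-admissible iff its 0-1
encoding has `b₁ = b_m = 1` and contains neither `00` nor `111` as a substring. -/
theorem stmt10 (p : ℕ) (hp : 1 ≤ p) (X : Finset V) (hX : X.Nonempty)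
    (E : Finset (V × V)) (hN : IsPhyloNet E p X)
    (m : ℕ) (hm : 1 ≤ m) (e : ℕ → V × V) (Z : Finset (V × V))
    (hZdef : Z = (Finset.range m).image e)
    (hinj : ∀ i < m, ∀ j < m, e i = e j → i = j)
    (hchain : ∀ i, i + 1 < m → Shares (e i) (e (i + 1)))
    (hmax : IsMaximalZigzagTrail E Z) (hfence : ¬ IsCrown Z)
    (S : Finset (V × V)) (hS : S ⊆ Z) :
    BAdmissible E Z S ↔
      (e 0 ∈ S ∧ e (m - 1) ∈ S ∧
       (∀ i, i + 1 < m → (e i ∈ S ∨ e (i + 1) ∈ S)) ∧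
       (∀ i, i + 2 < m → ¬ (e i ∈ S ∧ e (i + 1) ∈ S ∧ e (i + 2) ∈ S))) := by
  have hdeg : ∀ v, outdeg E v ≤ 2 ∧ indeg E v ≤ 2 := fun v => deg_le_two hN v
  let c : ZCtx V := ⟨E, m, e, Z, hm, hZdef, hinj, hchain, hmax, hfence, hdeg⟩
  have hmemZ : ∀ i, i < m → e i ∈ Z := fun i hi => by
    rw [hZdef]; exact mem_image_of_mem _ (mem_range.mpr hi)
  have hf0 : outdeg E (e 0).1 = 1 ∨ indeg E (e 0).2 = 1 := c.force0
  have hfl : outdeg E (e (m - 1)).1 = 1 ∨ indeg E (e (m - 1)).2 = 1 := c.reverse.force0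
  have hadj : ∀ i, i < m → ∀ j, j < m → Shares (e i) (e j) → i = j ∨ i + 1 = j ∨ j + 1 = i :=
    fun i hi j hj hsh => c.adj hi hj hsh
  have hint : ∀ i, 1 ≤ i → i + 1 < m → 2 ≤ outdeg E (e i).1 ∧ 2 ≤ indeg E (e i).2 :=
    fun i h1 h2 => c.interior h1 h2
  constructor
  · rintro ⟨hA, hmin⟩
    obtain ⟨hSZ, hC1, hC2⟩ := hA
    refine ⟨hC1 _ (hmemZ 0 (by omega)) hf0, hC1 _ (hmemZ (m - 1) (by omega)) hfl, ?_, ?_⟩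
    · intro i hi
      exact hC2 _ (hmemZ i (by omega)) _ (hmemZ (i + 1) hi)
        (fun h => by have := hinj i (by omega) (i + 1) hi h; omega) (hchain i hi)
    · rintro i hi ⟨h1, h2, h3⟩
      refine hmin (S.erase (e (i + 1))) (Finset.erase_ssubset h2) ⟨?_, ?_, ?_⟩
      · exact (Finset.erase_subset _ _).trans hS
      · intro f hfZ hcond
        refine Finset.mem_erase.mpr ⟨?_, hC1 f hfZ hcond⟩
        rintro rfl
        have := hint (i + 1) (by omega) (by omega)
        omega
      · intro f hf g hg hne hsh
        rw [hZdef, mem_image] at hf hg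
        obtain ⟨k1, hk1r, rfl⟩ := hf
        obtain ⟨k2, hk2r, rfl⟩ := hg
        have hk1 := mem_range.mp hk1r
        have hk2 := mem_range.mp hk2r
        have hk12 : k1 + 1 = k2 ∨ k2 + 1 = k1 := by
          rcases hadj k1 hk1 k2 hk2 hsh with h | h | h
          · exact absurd (congrArg e h) hne
          · exact Or.inl h
          · exact Or.inr h
        by_cases hc1 : k1 = i + 1
        · subst hc1
          have hk2' : k2 = i ∨ k2 = i + 2 := by omega
          have hgS : e k2 ∈ S := by rcases hk2' with rfl | rfl; exacts [h1, h3]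
          exact Or.inr (Finset.mem_erase.mpr
            ⟨fun hq => by have := hinj k2 hk2 (i + 1) (by omega) hq; omega, hgS⟩)
        · by_cases hc2 : k2 = i + 1
          · subst hc2
            have hk1' : k1 = i ∨ k1 = i + 2 := by omega
            have hgS : e k1 ∈ S := by rcases hk1' with rfl | rfl; exacts [h1, h3]
            exact Or.inl (Finset.mem_erase.mpr
              ⟨fun hq => by have := hinj k1 hk1 (i + 1) (by omega) hq; omega, hgS⟩)
          · rcases hC2 _ (hmemZ k1 hk1) _ (hmemZ k2 hk2) hne hsh with h | h
            · exact Or.inl (Finset.mem_erase.mpr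
                ⟨fun hq => hc1 (hinj k1 hk1 (i + 1) (by omega) hq), h⟩)
            · exact Or.inr (Finset.mem_erase.mpr
                ⟨fun hq => hc2 (hinj k2 hk2 (i + 1) (by omega) hq), h⟩)
  · rintro ⟨h0, hl, h00, h111⟩
    have hAadm : AAdmissible E Z S := by
      refine ⟨hS, ?_, ?_⟩
      · intro f hfZ hcond
        rw [hZdef, mem_image] at hfZ
        obtain ⟨k, hkr, rfl⟩ := hfZ
        have hk := mem_range.mp hkr
        rcases Nat.eq_zero_or_pos k with rfl | hk0
        · exact h0
        · by_cases hkl : k = m - 1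
          · rw [hkl]; exact hl
          · exact absurd hcond (by have := hint k hk0 (by omega); omega)
      · intro f hf g hg hne hsh
        rw [hZdef, mem_image] at hf hg
        obtain ⟨k1, hk1r, rfl⟩ := hf
        obtain ⟨k2, hk2r, rfl⟩ := hg
        have hk1 := mem_range.mp hk1r
        have hk2 := mem_range.mp hk2r
        rcases hadj k1 hk1 k2 hk2 hsh with h | h | h
        · exact absurd (congrArg e h) hne
        · rcases h00 k1 (by omega) with hx | hx
          · exact Or.inl hx
          · exact Or.inr (by rwa [h] at hx)
        · rcases h00 k2 (by omega) with hx | hx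
          · exact Or.inr hx
          · exact Or.inl (by rwa [h] at hx)
    refine ⟨hAadm, ?_⟩
    rintro S' hss ⟨hS'Z, hC1', hC2'⟩
    obtain ⟨x, hxS, hxS'⟩ := Finset.exists_of_ssubset hss
    have hxZ := hS hxS
    rw [hZdef, mem_image] at hxZ
    obtain ⟨k, hkr, rfl⟩ := hxZ
    have hk := mem_range.mp hkr
    rcases Nat.eq_zero_or_pos k with rfl | hk0
    · exact hxS' (hC1' _ (hmemZ 0 (by omega)) hf0)
    · by_cases hkl : k = m - 1
      · rw [hkl] at hxS'
        exact hxS' (hC1' _ (hmemZ (m - 1) (by omega)) hfl)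
      · obtain ⟨k', rfl⟩ : ∃ k', k = k' + 1 := ⟨k - 1, by omega⟩
        have hk1 : k' + 2 < m := by omega
        have ha : e k' ∈ S' := by
          rcases hC2' _ (hmemZ k' (by omega)) _ (hmemZ (k' + 1) (by omega))
            (fun h => by have := hinj k' (by omega) (k' + 1) (by omega) h; omega)
            (hchain k' (by omega)) with h | h
          · exact h
          · exact absurd h hxS'
        have hb : e (k' + 2) ∈ S' := by
          rcases hC2' _ (hmemZ (k' + 1) (by omega)) _ (hmemZ (k' + 2) hk1)
            (fun h => by have := hinj (k' + 1) (by omega) (k' + 2) hk1 h; omega)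
            (hchain (k' + 1) hk1) with h | h
          · exact absurd h hxS'
          · exact h
        exact h111 k' hk1 ⟨hss.subset ha, hxS, hss.subset hb⟩
end

section
/- Let p ≥ 1 be an integer, let N be a p-rooted almost-binary phylogenetic network on X, and let Z = (e_1, ..., e_m) be a maximal zig-zag trail of N that is a crown. Then a subset S ⊆ E(Z), encoded as the 0-1 string ⟨b_1 ... b_m⟩ with b_i = 1 iff e_i ∈ S, is B-admissible if and only if no '00' and no '111' occurs in the string read in any circular ordering (i.e., viewing the indices modulo m). -/
open Finset

variable {V : Type} [DecidableEq V] [Fintype V]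

theorem stmt11_modv (m x : ℕ) (hx : x < 2*m) : x % m = if x < m then x else x - m := by
  split_ifs with h
  · exact Nat.mod_eq_of_lt h
  · conv_lhs => rw [show x = (x - m) + m from by omega]
    rw [Nat.add_mod_right, Nat.mod_eq_of_lt (by omega)]

theorem stmt11_mfact1 (m j : ℕ) (h : j < m) (h3 : 3 ≤ m) : ((j + m - 1) % m + 1) % m = j := by
  rw [stmt11_modv m (j+m-1) (by omega)]
  split_ifs with h1 <;> rw [stmt11_modv m _ (by omega)] <;> split_ifs <;> omega

theorem stmt11_mfact2 (m i : ℕ) (h : i < m) (h3 : 3 ≤ m) : ((i+1) % m + 1) % m = (i+2) % m := by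
  rw [stmt11_modv m (i+1) (by omega), stmt11_modv m (i+2) (by omega)]
  split_ifs with h1 h2 <;> rw [stmt11_modv m _ (by omega)] <;> split_ifs <;> omega

theorem stmt11_mfact3 (m i : ℕ) (h : i < m) (h3 : 3 ≤ m) : ((i+1) % m + m - 1) % m = i := by
  rw [stmt11_modv m (i+1) (by omega)]
  split_ifs with h1 <;> rw [stmt11_modv m _ (by omega)] <;> split_ifs <;> omega

theorem stmt11_mfact4 (m i : ℕ) (h : i < m) (h3 : 3 ≤ m) : ((i+m-1) % m + 2) % m = (i+1) % m := by
  rw [stmt11_modv m (i+m-1) (by omega), stmt11_modv m (i+1) (by omega)]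
  split_ifs with h1 h2 <;> rw [stmt11_modv m _ (by omega)] <;> split_ifs <;> omega

theorem stmt11_mfact5 (m i : ℕ) (h : i < m) (h3 : 3 ≤ m) : (i+m-1) % m ≠ i := by
  rw [stmt11_modv m _ (by omega)]; split_ifs <;> omega

theorem stmt11_mfact6 (m i : ℕ) (h : i < m) (h3 : 3 ≤ m) : (i+1) % m ≠ i := by
  rw [stmt11_modv m _ (by omega)]; split_ifs <;> omega

theorem stmt11_mfact7 (m i : ℕ) (h : i < m) (h3 : 3 ≤ m) : (i+2) % m ≠ (i+1) % m := by
  rw [stmt11_modv m (i+2) (by omega), stmt11_modv m (i+1) (by omega)]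
  split_ifs <;> omega

theorem stmt11_mfact8 (m i : ℕ) (h : i < m) (h3 : 3 ≤ m) : (i+1) % m ≠ (i+m-1) % m := by
  rw [stmt11_modv m (i+1) (by omega), stmt11_modv m (i+m-1) (by omega)]
  split_ifs <;> omega

lemma stmt11_deg_bounds {E : Finset (V × V)} {p : ℕ} {X : Finset V} (hN : IsPhyloNet E p X)
    {g : V × V} (hg : g ∈ E) : outdeg E g.1 ≤ 2 ∧ indeg E g.2 ≤ 2 := by
  have h1v : g.1 ∈ verts E := Finset.mem_union_left _ (Finset.mem_image.mpr ⟨g, hg, rfl⟩)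
  have h2v : g.2 ∈ verts E := Finset.mem_union_right _ (Finset.mem_image.mpr ⟨g, hg, rfl⟩)
  have hout1 : 1 ≤ outdeg E g.1 := Finset.card_pos.mpr ⟨g, Finset.mem_filter.mpr ⟨hg, rfl⟩⟩
  have hin1 : 1 ≤ indeg E g.2 := Finset.card_pos.mpr ⟨g, Finset.mem_filter.mpr ⟨hg, rfl⟩⟩
  constructor
  · by_cases hX1 : g.1 ∈ X
    · rw [← hN.leaves_eq, Finset.mem_filter] at hX1
      omega
    · by_cases hi : indeg E g.1 = 0
      · rcases hN.root_outdeg g.1 h1v hi with h | h <;> omega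
      · rcases (hN.internal_deg g.1 h1v hi hX1).2 with h | h <;> omega
  · by_cases hX2 : g.2 ∈ X
    · rw [← hN.leaves_eq, Finset.mem_filter] at hX2
      omega
    · rcases (hN.internal_deg g.2 h2v (by omega) hX2).1 with h | h <;> omega

lemma stmt11_two_le_outdeg {E : Finset (V × V)} {a b : V × V}
    (ha : a ∈ E) (hb : b ∈ E) (hab : a ≠ b) (h1 : b.1 = a.1) : 2 ≤ outdeg E a.1 := by
  have hsub : ({a, b} : Finset (V × V)) ⊆ E.filter (fun x => x.1 = a.1) := by
    intro x hx
    simp only [Finset.mem_insert, Finset.mem_singleton] at hx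
    rcases hx with rfl | rfl <;> exact Finset.mem_filter.mpr ⟨by assumption, by simp [h1]⟩
  calc 2 = ({a, b} : Finset (V × V)).card := (Finset.card_pair hab).symm
    _ ≤ _ := Finset.card_le_card hsub

lemma stmt11_two_le_indeg {E : Finset (V × V)} {a b : V × V}
    (ha : a ∈ E) (hb : b ∈ E) (hab : a ≠ b) (h1 : b.2 = a.2) : 2 ≤ indeg E a.2 := by
  have hsub : ({a, b} : Finset (V × V)) ⊆ E.filter (fun x => x.2 = a.2) := by
    intro x hx
    simp only [Finset.mem_insert, Finset.mem_singleton] at hx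
    rcases hx with rfl | rfl <;> exact Finset.mem_filter.mpr ⟨by assumption, by simp [h1]⟩
  calc 2 = ({a, b} : Finset (V × V)).card := (Finset.card_pair hab).symm
    _ ≤ _ := Finset.card_le_card hsub

lemma stmt11_three_le_outdeg {E : Finset (V × V)} {a b c : V × V}
    (ha : a ∈ E) (hb : b ∈ E) (hc : c ∈ E)
    (hab : a ≠ b) (hac : a ≠ c) (hbc : b ≠ c)
    (h1 : b.1 = a.1) (h2 : c.1 = a.1) : 3 ≤ outdeg E a.1 := by
  have hsub : ({a, b, c} : Finset (V × V)) ⊆ E.filter (fun x => x.1 = a.1) := by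
    intro x hx
    simp only [Finset.mem_insert, Finset.mem_singleton] at hx
    rcases hx with rfl | rfl | rfl <;> exact Finset.mem_filter.mpr ⟨by assumption, by simp [h1, h2]⟩
  have hcard : ({a, b, c} : Finset (V × V)).card = 3 := by
    rw [Finset.card_insert_of_notMem (by simp [hab, hac]),
        Finset.card_insert_of_notMem (by simp [hbc]), Finset.card_singleton]
  calc 3 = ({a, b, c} : Finset (V × V)).card := hcard.symm
    _ ≤ _ := Finset.card_le_card hsub

lemma stmt11_three_le_indeg {E : Finset (V × V)} {a b c : V × V}
    (ha : a ∈ E) (hb : b ∈ E) (hc : c ∈ E)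
    (hab : a ≠ b) (hac : a ≠ c) (hbc : b ≠ c)
    (h1 : b.2 = a.2) (h2 : c.2 = a.2) : 3 ≤ indeg E a.2 := by
  have hsub : ({a, b, c} : Finset (V × V)) ⊆ E.filter (fun x => x.2 = a.2) := by
    intro x hx
    simp only [Finset.mem_insert, Finset.mem_singleton] at hx
    rcases hx with rfl | rfl | rfl <;> exact Finset.mem_filter.mpr ⟨by assumption, by simp [h1, h2]⟩
  have hcard : ({a, b, c} : Finset (V × V)).card = 3 := by
    rw [Finset.card_insert_of_notMem (by simp [hab, hac]),
        Finset.card_insert_of_notMem (by simp [hbc]), Finset.card_singleton]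
  calc 3 = ({a, b, c} : Finset (V × V)).card := hcard.symm
    _ ≤ _ := Finset.card_le_card hsub

lemma stmt11_crown_partner {Z : Finset (V × V)} (hc : IsCrown Z) {g : V × V} (hg : g ∈ Z) :
    (∃ h ∈ Z, h ≠ g ∧ h.1 = g.1) ∧ (∃ h ∈ Z, h ≠ g ∧ h.2 = g.2) := by
  obtain ⟨m, f, hm1, hme, hf0, hZeq, hinj⟩ := hc
  have hm2 : 2 ≤ m := by omega
  have hmemz : ∀ k, k < m → zigEdge f true k ∈ Z := by
    intro k hk; rw [hZeq]; exact Finset.mem_image.mpr ⟨k, Finset.mem_range.mpr hk, rfl⟩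
  have hedne : ∀ k l, k < m → l < m → k ≠ l → zigEdge f true k ≠ zigEdge f true l :=
    fun k l hk hl hkl h => hkl (hinj k hk l hl h)
  have he : ∀ i, i % 2 = 0 → zigEdge f true i = (f i, f (i+1)) := by
    intro i h; simp [zigEdge, h]
  have ho : ∀ i, i % 2 = 1 → zigEdge f true i = (f (i+1), f i) := by
    intro i h; simp [zigEdge, h]
  rw [hZeq] at hg
  obtain ⟨j, hjr, hgj⟩ := Finset.mem_image.mp hg
  rw [Finset.mem_range] at hjr
  by_cases hp : j % 2 = 0
  · have hgj' : g = (f j, f (j+1)) := by rw [← hgj, he j hp]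
    constructor
    · rcases Nat.eq_zero_or_pos j with rfl | hj1
      · refine ⟨zigEdge f true (m-1), hmemz _ (by omega), ?_, ?_⟩
        · rw [← hgj]; exact hedne _ _ (by omega) (by omega) (by omega)
        · rw [ho (m-1) (by omega), hgj']
          show f (m-1+1) = f 0
          rw [show m-1+1 = m from by omega]; exact hf0
      · refine ⟨zigEdge f true (j-1), hmemz _ (by omega), ?_, ?_⟩
        · rw [← hgj]; exact hedne _ _ (by omega) hjr (by omega)
        · rw [ho (j-1) (by omega), hgj']
          show f (j-1+1) = f j
          rw [show j-1+1 = j from by omega]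
    · have hjm : j + 1 < m := by omega
      refine ⟨zigEdge f true (j+1), hmemz _ hjm, ?_, ?_⟩
      · rw [← hgj]; exact hedne _ _ hjm hjr (by omega)
      · rw [ho (j+1) (by omega), hgj']
  · have hp1 : j % 2 = 1 := by omega
    have hgj' : g = (f (j+1), f j) := by rw [← hgj, ho j hp1]
    constructor
    · by_cases hjm : j + 1 < m
      · refine ⟨zigEdge f true (j+1), hmemz _ hjm, ?_, ?_⟩
        · rw [← hgj]; exact hedne _ _ hjm hjr (by omega)
        · rw [he (j+1) (by omega), hgj']
      · refine ⟨zigEdge f true 0, hmemz _ (by omega), ?_, ?_⟩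
        · rw [← hgj]; exact hedne _ _ (by omega) hjr (by omega)
        · rw [he 0 (by omega), hgj']
          show f 0 = f (j+1)
          rw [show j+1 = m from by omega]; exact hf0.symm
    · refine ⟨zigEdge f true (j-1), hmemz _ (by omega), ?_, ?_⟩
      · rw [← hgj]; exact hedne _ _ (by omega) hjr (by omega)
      · rw [he (j-1) (by omega), hgj']
        show f (j-1+1) = f j
        rw [show j-1+1 = j from by omega]

lemma stmt11_crown_card {Z : Finset (V × V)} (hc : IsCrown Z) : 4 ≤ Z.card := by
  obtain ⟨m, f, hm1, hme, hf0, hZeq, hinj⟩ := hc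
  have hm2 : m ≠ 2 := by
    rintro rfl
    have h0 : zigEdge f true 0 = (f 0, f 1) := by simp [zigEdge]
    have h1 : zigEdge f true 1 = (f 2, f 1) := by simp [zigEdge]
    have := hinj 0 (by omega) 1 (by omega) (by rw [h0, h1, hf0])
    omega
  have hcard : Z.card = m := by
    rw [hZeq, Finset.card_image_of_injOn, Finset.card_range]
    intro a ha b hb hab
    exact hinj a (by simpa using ha) b (by simpa using hb) hab
  omega

/-- For a crown `Z = (e₁, ..., e_m)`, a subset `S ⊆ E(Z)` is B-admissible iff its 0-1
encoding contains no `00` and no `111` read circularly (indices modulo `m`). -/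
theorem stmt11 (p : ℕ) (hp : 1 ≤ p) (X : Finset V) (hX : X.Nonempty)
    (E : Finset (V × V)) (hN : IsPhyloNet E p X)
    (m : ℕ) (hm : 1 ≤ m) (hmeven : m % 2 = 0) (e : ℕ → V × V) (Z : Finset (V × V))
    (hZdef : Z = (Finset.range m).image e)
    (hinj : ∀ i < m, ∀ j < m, e i = e j → i = j)
    (hchain : ∀ i < m, Shares (e i) (e ((i + 1) % m)))
    (hmax : IsMaximalZigzagTrail E Z) (hcrown : IsCrown Z)
    (S : Finset (V × V)) (hS : S ⊆ Z) :
    BAdmissible E Z S ↔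
      ((∀ i < m, (e i ∈ S ∨ e ((i + 1) % m) ∈ S)) ∧
       (∀ i < m, ¬ (e i ∈ S ∧ e ((i + 1) % m) ∈ S ∧ e ((i + 2) % m) ∈ S))) := by
  classical
  have hZE : Z ⊆ E := hmax.1.1
  have hm4 : 4 ≤ m := by
    have h4 := stmt11_crown_card hcrown
    have hcard : Z.card = m := by
      rw [hZdef, Finset.card_image_of_injOn, Finset.card_range]
      intro a ha b hb hab
      exact hinj a (by simpa using ha) b (by simpa using hb) hab
    omega
  have hm3 : 3 ≤ m := by omega
  have hmemZ : ∀ i, i < m → e i ∈ Z := by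
    intro i hi; rw [hZdef]; exact Finset.mem_image.mpr ⟨i, Finset.mem_range.mpr hi, rfl⟩
  have hEne : ∀ i, i < m → ∀ j, j < m → i ≠ j → e i ≠ e j :=
    fun i hi j hj hij h => hij (hinj i hi j hj h)
  have hsymm : ∀ a b : V × V, Shares a b → Shares b a :=
    fun a b h => h.elim (fun h => Or.inl h.symm) (fun h => Or.inr h.symm)
  have hC1 : ∀ g ∈ Z, ¬ (outdeg E g.1 = 1 ∨ indeg E g.2 = 1) := by
    intro g hg hd
    obtain ⟨⟨h1, h1Z, h1ne, h1t⟩, h2, h2Z, h2ne, h2h⟩ := stmt11_crown_partner hcrown hg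
    rcases hd with hd | hd
    · have := stmt11_two_le_outdeg (hZE hg) (hZE h1Z) (Ne.symm h1ne) h1t; omega
    · have := stmt11_two_le_indeg (hZE hg) (hZE h2Z) (Ne.symm h2ne) h2h; omega
  have hC1' : ∀ T : Finset (V × V), ∀ g ∈ Z, (outdeg E g.1 = 1 ∨ indeg E g.2 = 1) → g ∈ T :=
    fun T g hg hd => absurd hd (hC1 g hg)
  have hnbr : ∀ j, j < m → ∀ g ∈ Z, g ≠ e j → Shares g (e j) →
      g = e ((j + m - 1) % m) ∨ g = e ((j + 1) % m) := by
    intro j hj g hg hgne hsh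
    have hialt : (j + m - 1) % m < m := Nat.mod_lt _ (by omega)
    have hiblt : (j + 1) % m < m := Nat.mod_lt _ (by omega)
    have hsha : Shares (e ((j + m - 1) % m)) (e j) := by
      have h := hchain _ hialt
      rwa [stmt11_mfact1 m j hj hm3] at h
    have hshb : Shares (e j) (e ((j + 1) % m)) := hchain j hj
    by_contra hcon
    push_neg at hcon
    obtain ⟨hga, hgb⟩ := hcon
    have haZ := hmemZ _ hialt
    have hbZ := hmemZ _ hiblt
    have haej : e ((j + m - 1) % m) ≠ e j := hEne _ hialt j hj (stmt11_mfact5 m j hj hm3)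
    have hbej : e ((j + 1) % m) ≠ e j := hEne _ hiblt j hj (stmt11_mfact6 m j hj hm3)
    have hab : e ((j + m - 1) % m) ≠ e ((j + 1) % m) :=
      hEne _ hialt _ hiblt (Ne.symm (stmt11_mfact8 m j hj hm3))
    have hout := (stmt11_deg_bounds hN (hZE (hmemZ j hj))).1
    have hin := (stmt11_deg_bounds hN (hZE (hmemZ j hj))).2
    rcases hsh with hg1 | hg2
    · rcases hsha with ha1 | ha2
      · have := stmt11_three_le_outdeg (hZE (hmemZ j hj)) (hZE hg) (hZE haZ)
          (Ne.symm hgne) (Ne.symm haej) hga hg1 ha1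
        omega
      · rcases hshb with hb1 | hb2
        · have := stmt11_three_le_outdeg (hZE (hmemZ j hj)) (hZE hg) (hZE hbZ)
            (Ne.symm hgne) (Ne.symm hbej) hgb hg1 hb1.symm
          omega
        · have := stmt11_three_le_indeg (hZE (hmemZ j hj)) (hZE haZ) (hZE hbZ)
            (Ne.symm haej) (Ne.symm hbej) hab ha2 hb2.symm
          omega
    · rcases hsha with ha1 | ha2
      · rcases hshb with hb1 | hb2
        · have := stmt11_three_le_outdeg (hZE (hmemZ j hj)) (hZE haZ) (hZE hbZ)
            (Ne.symm haej) (Ne.symm hbej) hab ha1 hb1.symm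
          omega
        · have := stmt11_three_le_indeg (hZE (hmemZ j hj)) (hZE hg) (hZE hbZ)
            (Ne.symm hgne) (Ne.symm hbej) hgb hg2 hb2.symm
          omega
      · have := stmt11_three_le_indeg (hZE (hmemZ j hj)) (hZE hg) (hZE haZ)
          (Ne.symm hgne) (Ne.symm haej) hga hg2 ha2
        omega
  constructor
  · rintro ⟨⟨hSZ, hA1, hA2⟩, hmin⟩
    constructor
    · intro i hi
      exact hA2 (e i) (hmemZ i hi) _ (hmemZ _ (Nat.mod_lt _ (by omega)))
        (hEne i hi _ (Nat.mod_lt _ (by omega)) (Ne.symm (stmt11_mfact6 m i hi hm3))) (hchain i hi)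
    · rintro i hi ⟨h1, h2, h3⟩
      have hklt : (i + 1) % m < m := Nat.mod_lt _ (by omega)
      have hk2lt : (i + 2) % m < m := Nat.mod_lt _ (by omega)
      refine hmin (S.erase (e ((i + 1) % m))) (Finset.erase_ssubset h2)
        ⟨(Finset.erase_subset _ _).trans hSZ, hC1' _, ?_⟩
      intro f1 hf1 f2 hf2 hfne hfsh
      by_cases hf1k : f1 = e ((i + 1) % m)
      · subst hf1k
        have hh := hnbr _ hklt f2 hf2 (Ne.symm hfne) (hsymm _ _ hfsh)
        rw [stmt11_mfact3 m i hi hm3, stmt11_mfact2 m i hi hm3] at hh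
        right
        rcases hh with rfl | rfl
        · exact Finset.mem_erase.mpr ⟨hEne i hi _ hklt (Ne.symm (stmt11_mfact6 m i hi hm3)), h1⟩
        · exact Finset.mem_erase.mpr ⟨hEne _ hk2lt _ hklt (stmt11_mfact7 m i hi hm3), h3⟩
      · by_cases hf2k : f2 = e ((i + 1) % m)
        · subst hf2k
          have hh := hnbr _ hklt f1 hf1 hf1k hfsh
          rw [stmt11_mfact3 m i hi hm3, stmt11_mfact2 m i hi hm3] at hh
          left
          rcases hh with rfl | rfl
          · exact Finset.mem_erase.mpr ⟨hEne i hi _ hklt (Ne.symm (stmt11_mfact6 m i hi hm3)), h1⟩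
          · exact Finset.mem_erase.mpr ⟨hEne _ hk2lt _ hklt (stmt11_mfact7 m i hi hm3), h3⟩
        · rcases hA2 f1 hf1 f2 hf2 hfne hfsh with h | h
          · exact Or.inl (Finset.mem_erase.mpr ⟨hf1k, h⟩)
          · exact Or.inr (Finset.mem_erase.mpr ⟨hf2k, h⟩)
  · rintro ⟨hcov, h111⟩
    refine ⟨⟨hS, hC1' _, ?_⟩, ?_⟩
    · intro f1 hf1 f2 hf2 hfne hfsh
      have hf1' : f1 ∈ (Finset.range m).image e := by rw [← hZdef]; exact hf1
      obtain ⟨i, hir, rfl⟩ := Finset.mem_image.mp hf1'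
      have hi : i < m := Finset.mem_range.mp hir
      rcases hnbr i hi f2 hf2 (Ne.symm hfne) (hsymm _ _ hfsh) with rfl | rfl
      · have h := hcov _ (Nat.mod_lt (i + m - 1) (show 0 < m by omega))
        rw [stmt11_mfact1 m i hi hm3] at h
        exact h.symm
      · exact hcov i hi
    · intro S' hss hadm'
      obtain ⟨hsub', hc1', hc2'⟩ := hadm'
      obtain ⟨g, hgS, hgS'⟩ := Finset.exists_of_ssubset hss
      have hgZ : g ∈ (Finset.range m).image e := by rw [← hZdef]; exact hS hgS
      obtain ⟨i, hir, rfl⟩ := Finset.mem_image.mp hgZ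
      have hi : i < m := Finset.mem_range.mp hir
      have hialt : (i + m - 1) % m < m := Nat.mod_lt _ (by omega)
      have hiblt : (i + 1) % m < m := Nat.mod_lt _ (by omega)
      have hsha : Shares (e ((i + m - 1) % m)) (e i) := by
        have h := hchain _ hialt; rwa [stmt11_mfact1 m i hi hm3] at h
      have haS' : e ((i + m - 1) % m) ∈ S' :=
        (hc2' _ (hmemZ _ hialt) (e i) (hmemZ i hi)
          (hEne _ hialt i hi (stmt11_mfact5 m i hi hm3)) hsha).resolve_right hgS'
      have hbS' : e ((i + 1) % m) ∈ S' :=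
        (hc2' (e i) (hmemZ i hi) _ (hmemZ _ hiblt)
          (hEne i hi _ hiblt (Ne.symm (stmt11_mfact6 m i hi hm3))) (hchain i hi)).resolve_left hgS'
      have hsubS : S' ⊆ S := hss.subset
      exact h111 _ hialt ⟨hsubS haS', by rw [stmt11_mfact1 m i hi hm3]; exact hgS,
        by rw [stmt11_mfact4 m i hi hm3]; exact hsubS hbS'⟩
end

section
/- For any rooted almost-binary phylogenetic network N on X, there exists at least one minimal support network G ∈ B_N such that level(G) = level*(N), i.e., the minimum level among all support networks of N is attained by some minimal support network. -/
open Finset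

variable {V : Type} [DecidableEq V] [Fintype V]

lemma indeg_mono {S' S : Finset (V × V)} (h : S' ⊆ S) (v : V) :
    indeg S' v ≤ indeg S v :=
  Finset.card_le_card (Finset.filter_subset_filter _ h)

lemma indeg_le_two {S : Finset (V × V)} {X : Finset V}
    (hS : IsPhyloNet S 1 X) (v : V) : indeg S v ≤ 2 := by
  by_cases hv : v ∈ verts S
  · by_cases h0 : indeg S v = 0
    · omega
    · by_cases hX : v ∈ X
      · have := hS.leaves_eq ▸ hX
        rw [Finset.mem_filter] at this
        omega
      · rcases (hS.internal_deg v hv h0 hX).1 with h | h <;> omega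
  · have : (S.filter fun e => e.2 = v) = ∅ := by
      apply Finset.filter_eq_empty_iff.2
      intro e he hev
      exact hv (Finset.mem_union.2 (Or.inr (Finset.mem_image.2 ⟨e, he, hev⟩)))
    simp [indeg, this]

lemma usym_mono {S' S : Finset (V × V)} (h : S' ⊆ S) : usym S' ≤ usym S := by
  intro u v hadj
  exact ⟨hadj.1, hadj.2.imp (fun x => h x) (fun x => h x)⟩

lemma sameBlock_mono {S' S : Finset (V × V)} (h : S' ⊆ S) {e f : V × V}
    (hb : SameBlock S' e f) : SameBlock S e f := by
  rcases hb with rfl | ⟨a, w, hc, he, hf⟩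
  · exact Or.inl rfl
  · refine Or.inr ⟨a, w.transfer (usym S) ?_, hc.transfer _, ?_, ?_⟩
    · intro x hx
      exact (SimpleGraph.edgeSet_mono (usym_mono h)) (w.edges_subset_edgeSet hx)
    · rw [SimpleGraph.Walk.edges_transfer]; exact he
    · rw [SimpleGraph.Walk.edges_transfer]; exact hf

lemma level_mono {S' S : Finset (V × V)} {X : Finset V} (h : S' ⊆ S)
    (hS : IsPhyloNet S 1 X) : level S' ≤ level S := by
  apply Finset.sup_le
  intro e he
  calc blockReticCount S' e ≤ blockReticCount S e := by
        apply Set.ncard_le_ncard _ (Set.toFinite _)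
        rintro v ⟨hd, f, hf, hb, hv⟩
        have hd2 : indeg S v = 2 :=
          le_antisymm (indeg_le_two hS v) (hd ▸ indeg_mono h v)
        exact ⟨hd2, f, h hf, sameBlock_mono h hb, hv⟩
    _ ≤ level S := Finset.le_sup (h he)


/-- The base level of a rooted almost-binary phylogenetic network, i.e. the minimum level
among all its support networks, is attained by some minimal support network. -/
theorem stmt12 (X : Finset V) (hX : X.Nonempty)
    (E : Finset (V × V)) (hN : IsPhyloNet E 1 X) :
    ∃ S, IsMinimalSupportNet E S 1 X ∧
      level S = sInf {n | ∃ G, IsSupportNet E G 1 X ∧ level G = n} := by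
  have hE : IsSupportNet E E 1 X := ⟨Finset.Subset.refl _, rfl, hN⟩
  set A := {n | ∃ G, IsSupportNet E G 1 X ∧ level G = n} with hA
  have hAne : A.Nonempty := ⟨level E, E, hE, rfl⟩
  obtain ⟨G, hG, hGlvl⟩ := Nat.sInf_mem hAne
  set K := {k | ∃ S, IsSupportNet E S 1 X ∧ S ⊆ G ∧ S.card = k} with hK
  have hKne : K.Nonempty := ⟨G.card, G, hG, Finset.Subset.refl _, rfl⟩
  obtain ⟨S, hSsup, hSG, hScard⟩ := Nat.sInf_mem hKne
  refine ⟨S, ⟨hSsup, ?_⟩, ?_⟩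
  · intro S' hS' hlt
    have : S'.card ∈ K := ⟨S', hS', hlt.1.trans hSG, rfl⟩
    have h1 := Nat.sInf_le this
    have h2 := Finset.card_lt_card hlt
    omega
  · refine le_antisymm ?_ ?_
    · calc level S ≤ level G := level_mono hSG hG.2.2
        _ = sInf A := hGlvl
    · exact Nat.sInf_le ⟨S, hSsup, rfl⟩
end

section
/- Let p ≥ 1 be an integer, let N be a p-rooted almost-binary phylogenetic network on X, and let Z be a maximal zig-zag trail of N of length at most 2. Then E(Z) is the unique A-admissible subset of E(Z) (hence also the unique B-admissible and unique C-admissible subset). -/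
open Finset

variable {V : Type} [DecidableEq V] [Fintype V]

lemma exists_other_head {E : Finset (V × V)} {u v : V} (h : (u, v) ∈ E)
    (h1 : indeg E v ≠ 1) : ∃ c, (c, v) ∈ E ∧ (c, v) ≠ (u, v) := by
  by_contra hc
  push_neg at hc
  apply h1
  unfold indeg
  have heq : E.filter (fun e => e.2 = v) = {(u, v)} := by
    ext e
    simp only [mem_filter, mem_singleton]
    constructor
    · rintro ⟨he, hv⟩
      obtain ⟨a, b⟩ := e
      simp only at hv
      subst hv
      exact hc a he
    · rintro rfl; exact ⟨h, rfl⟩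
  rw [heq, card_singleton]

lemma exists_other_tail {E : Finset (V × V)} {u v : V} (h : (u, v) ∈ E)
    (h1 : outdeg E u ≠ 1) : ∃ c, (u, c) ∈ E ∧ (u, c) ≠ (u, v) := by
  by_contra hc
  push_neg at hc
  apply h1
  unfold outdeg
  have heq : E.filter (fun e => e.1 = u) = {(u, v)} := by
    ext e
    simp only [mem_filter, mem_singleton]
    constructor
    · rintro ⟨he, hv⟩
      obtain ⟨a, b⟩ := e
      simp only at hv
      subst hv
      exact hc b he
    · rintro rfl; exact ⟨h, rfl⟩
  rw [heq, card_singleton]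

lemma extend_contra {E Z : Finset (V × V)} (hZE : Z ⊆ E)
    (hmax : ∀ S', IsZigzagTrail E S' → ¬ Z ⊂ S')
    (f : V × V) (l : List (V × V)) (hnd : (f :: l).Nodup) (htf : l.toFinset = Z)
    (hch : (f :: l).Chain' Shares) (hf : f ∈ E) : False := by
  have hfZ : f ∉ Z := by
    rw [← htf]
    intro hmem
    exact (List.nodup_cons.mp hnd).1 (List.mem_toFinset.mp hmem)
  apply hmax (insert f Z)
    ⟨insert_subset hf hZE, f :: l, by simp, hnd, by simp [htf], hch⟩
  exact Finset.ssubset_insert hfZ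

/-- For a maximal zig-zag trail `Z` of length at most 2, `E(Z)` is the unique A-admissible
subset of `E(Z)` (hence also the unique B-admissible and unique C-admissible subset). -/
theorem stmt14 (p : ℕ) (hp : 1 ≤ p) (X : Finset V) (hX : X.Nonempty)
    (E : Finset (V × V)) (hN : IsPhyloNet E p X)
    (Z : Finset (V × V)) (hZ : IsMaximalZigzagTrail E Z) (hcard : Z.card ≤ 2) :
    (∀ S, AAdmissible E Z S ↔ S = Z) ∧
    (∀ S, BAdmissible E Z S ↔ S = Z) ∧
    (∀ S, CAdmissible E Z S ↔ S = Z) := by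
  obtain ⟨⟨hZE, l, hlne, hlnd, hltf, hlch⟩, hmax⟩ := hZ
  have hlen : l.length = Z.card := by
    rw [← hltf]; exact (List.toFinset_card_of_nodup hlnd).symm
  -- every edge of Z is "forced"
  have forced : ∀ e ∈ Z, outdeg E e.1 = 1 ∨ indeg E e.2 = 1 := by
    intro e he
    have hlen2 : l.length ≤ 2 := hlen ▸ hcard
    match l, hlne with
    | [e₀], _ =>
      have hZ1 : Z = {e₀} := by rw [← hltf]; simp
      have heq : e = e₀ := by rw [hZ1] at he; simpa using he
      subst heq
      right
      by_contra h1
      obtain ⟨c, hcE, hcne⟩ := exists_other_head (show (e.1, e.2) ∈ E from hZE he) h1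
      exact extend_contra hZE hmax (c, e.2) [e] (by simpa using hcne)
        (by rw [hZ1]; simp) (by simp [List.Chain', List.isChain_cons_cons, Shares]) hcE
    | [e₁, e₂], _ =>
      have hne : e₁ ≠ e₂ := by simpa using (List.nodup_cons.mp hlnd).1
      have hsh : Shares e₁ e₂ := by
        have := hlch; simp [List.Chain', List.isChain_cons_cons] at this; exact this
      have hZ2 : Z = {e₁, e₂} := by rw [← hltf]; simp
      have he12 : e = e₁ ∨ e = e₂ := by rw [hZ2] at he; simpa using he
      have h1E : (e₁.1, e₁.2) ∈ E := hZE (by rw [hZ2]; simp)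
      have h2E : (e₂.1, e₂.2) ∈ E := hZE (by rw [hZ2]; simp)
      rcases hsh with htail | hhead
      · -- tails equal: show indeg of each head is 1
        right
        by_contra h1
        rcases he12 with rfl | rfl
        · obtain ⟨c, hcE, hcne⟩ := exists_other_head h1E h1
          have hc2 : (c, e.2) ≠ e₂ := by
            intro hq
            apply hne
            have : e₂.2 = e.2 := by rw [← hq]
            exact Prod.ext htail this.symm
          exact extend_contra hZE hmax (c, e.2) [e, e₂]
            (by simp [hcne, hc2, hne])
            (by rw [hZ2]; simp)
            (by simp [List.Chain', List.isChain_cons_cons, Shares, htail]) hcE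
        · obtain ⟨c, hcE, hcne⟩ := exists_other_head h2E h1
          have hc1 : (c, e.2) ≠ e₁ := by
            intro hq
            apply hne
            have : e₁.2 = e.2 := by rw [← hq]
            exact Prod.ext htail this
          exact extend_contra hZE hmax (c, e.2) [e, e₁]
            (by simp [hcne, hc1, Ne.symm hne])
            (by rw [hZ2, Finset.pair_comm]; simp)
            (by simp [List.Chain', List.isChain_cons_cons, Shares, htail]) hcE
      · -- heads equal: show outdeg of each tail is 1
        left
        by_contra h1
        rcases he12 with rfl | rfl
        · obtain ⟨c, hcE, hcne⟩ := exists_other_tail h1E h1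
          have hc2 : (e.1, c) ≠ e₂ := by
            intro hq
            apply hne
            have : e₂.1 = e.1 := by rw [← hq]
            exact Prod.ext this.symm hhead
          exact extend_contra hZE hmax (e.1, c) [e, e₂]
            (by simp [hcne, hc2, hne])
            (by rw [hZ2]; simp)
            (by simp [List.Chain', List.isChain_cons_cons, Shares, hhead]) hcE
        · obtain ⟨c, hcE, hcne⟩ := exists_other_tail h2E h1
          have hc1 : (e.1, c) ≠ e₁ := by
            intro hq
            apply hne
            have : e₁.1 = e.1 := by rw [← hq]
            exact Prod.ext this hhead
          exact extend_contra hZE hmax (e.1, c) [e, e₁]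
            (by simp [hcne, hc1, Ne.symm hne])
            (by rw [hZ2, Finset.pair_comm]; simp)
            (by simp [List.Chain', List.isChain_cons_cons, Shares, hhead]) hcE
    | e₁ :: e₂ :: e₃ :: t, _ => simp at hlen2
  have key : ∀ S, AAdmissible E Z S → S = Z := by
    rintro S ⟨hSZ, hC1, _⟩
    exact Subset.antisymm hSZ (fun e he => hC1 e he (forced e he))
  have hZA : AAdmissible E Z Z :=
    ⟨Subset.rfl, fun e he _ => he, fun e₁ h₁ _ _ _ _ => Or.inl h₁⟩
  refine ⟨fun S => ⟨key S, fun h => h ▸ hZA⟩, fun S => ⟨?_, ?_⟩, fun S => ⟨?_, ?_⟩⟩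
  · rintro ⟨hA, _⟩; exact key S hA
  · rintro rfl
    exact ⟨hZA, fun S' hsub hA => (key S' hA ▸ hsub).ne rfl⟩
  · rintro ⟨hA, _⟩; exact key S hA
  · rintro rfl
    exact ⟨hZA, fun S' hA => le_of_eq (by rw [key S' hA])⟩
end

section
/- Let p ≥ 1 be an integer, let N be a p-rooted almost-binary phylogenetic network on X, and let Z be a maximal zig-zag trail of N that is a W-fence of length 4, written as v_0 > v_1 < v_2 > v_3 < v_4 with canonical edge ordering (e_1, e_2, e_3, e_4) = ((v_0,v_1), (v_2,v_1), (v_2,v_3), (v_4,v_3)). Then E(Z) has exactly two B-admissible subsets, namely {e_1, e_3, e_4} (encoded ⟨1011⟩) and {e_1, e_2, e_4} (encoded ⟨1101⟩), and each of them contains both incoming edges of exactly one vertex of Z (namely v_3 for ⟨1011⟩ and v_1 for ⟨1101⟩), so that each induces exactly one reticulation among the vertices of Z. -/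
open Finset

variable {V : Type} [DecidableEq V] [Fintype V]

/-- A maximal zig-zag trail that is a W-fence of length 4, `v₀ > v₁ < v₂ > v₃ < v₄`, has
exactly two B-admissible subsets, `⟨1011⟩` and `⟨1101⟩`; the former contains both in-edges
of exactly `v₃` and the latter of exactly `v₁`, so each induces exactly one reticulation. -/
theorem stmt15 (p : ℕ) (hp : 1 ≤ p) (X : Finset V) (hX : X.Nonempty)
    (E : Finset (V × V)) (hN : IsPhyloNet E p X)
    (v₀ v₁ v₂ v₃ v₄ : V) (hdist : ([v₀, v₁, v₂, v₃, v₄] : List V).Nodup)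
    (e₁ e₂ e₃ e₄ : V × V)
    (he₁ : e₁ = (v₀, v₁)) (he₂ : e₂ = (v₂, v₁)) (he₃ : e₃ = (v₂, v₃)) (he₄ : e₄ = (v₄, v₃))
    (Z : Finset (V × V)) (hZdef : Z = {e₁, e₂, e₃, e₄})
    (hmax : IsMaximalZigzagTrail E Z) :
    (∀ S, BAdmissible E Z S ↔ (S = {e₁, e₃, e₄} ∨ S = {e₁, e₂, e₄})) ∧
    ((verts Z).filter fun v => indeg ({e₁, e₃, e₄} : Finset (V × V)) v = 2) = {v₃} ∧
    ((verts Z).filter fun v => indeg ({e₁, e₂, e₄} : Finset (V × V)) v = 2) = {v₁} := by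
  subst he₁ he₂ he₃ he₄ hZdef
  simp only [List.nodup_cons, List.mem_cons, List.mem_singleton, List.not_mem_nil, or_false,
    List.nodup_nil, and_true, not_or] at hdist
  obtain ⟨⟨h01, h02, h03, h04⟩, ⟨h12, h13, h14⟩, ⟨h23, h24⟩, h34, -⟩ := hdist
  have h01' : v₁ ≠ v₀ := Ne.symm h01
  have h02' : v₂ ≠ v₀ := Ne.symm h02
  have h03' : v₃ ≠ v₀ := Ne.symm h03
  have h04' : v₄ ≠ v₀ := Ne.symm h04
  have h12' : v₂ ≠ v₁ := Ne.symm h12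
  have h13' : v₃ ≠ v₁ := Ne.symm h13
  have h14' : v₄ ≠ v₁ := Ne.symm h14
  have h23' : v₃ ≠ v₂ := Ne.symm h23
  have h24' : v₄ ≠ v₂ := Ne.symm h24
  have h34' : v₄ ≠ v₃ := Ne.symm h34
  set Z : Finset (V × V) := {(v₀, v₁), (v₂, v₁), (v₂, v₃), (v₄, v₃)} with hZdef
  have hZE : Z ⊆ E := hmax.1.1
  have hm1 : (v₀, v₁) ∈ E := hZE (by simp [hZdef])
  have hm2 : (v₂, v₁) ∈ E := hZE (by simp [hZdef])
  have hm3 : (v₂, v₃) ∈ E := hZE (by simp [hZdef])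
  have hm4 : (v₄, v₃) ∈ E := hZE (by simp [hZdef])
  -- outdeg v₀ = 1
  have hout0 : outdeg E v₀ = 1 := by
    by_contra h
    have hmem : (v₀, v₁) ∈ E.filter (fun e => e.1 = v₀) := by simp [hm1]
    have hpos : 0 < (E.filter (fun e => e.1 = v₀)).card := Finset.card_pos.mpr ⟨_, hmem⟩
    have hlt : 1 < (E.filter (fun e => e.1 = v₀)).card := by
      rcases Nat.lt_or_ge 1 (E.filter (fun e => e.1 = v₀)).card with h' | h'
      · exact h'
      · exact absurd (by omega : (E.filter (fun e => e.1 = v₀)).card = 1) h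
    obtain ⟨f, hf, hfne⟩ := Finset.exists_mem_ne hlt (v₀, v₁)
    obtain ⟨a, b⟩ := f
    obtain ⟨hfE, hf1⟩ := Finset.mem_filter.mp hf
    simp only at hf1
    subst a
    have hb1 : b ≠ v₁ := by rintro rfl; exact hfne rfl
    have hfZ : (v₀, b) ∉ Z := by
      simp only [hZdef, Finset.mem_insert, Finset.mem_singleton, Prod.mk.injEq, not_or]
      refine ⟨fun h => hb1 h.2, fun h => h02 h.1, fun h => h02 h.1, fun h => h04 h.1⟩
    have hZ' : IsZigzagTrail E (insert (v₀, b) Z) := by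
      refine ⟨Finset.insert_subset hfE hZE, [(v₀, b), (v₀, v₁), (v₂, v₁), (v₂, v₃), (v₄, v₃)],
        by simp, ?_, ?_, ?_⟩
      · simp [List.nodup_cons, Prod.ext_iff, hb1, Ne.symm hb1, h02, h04, h13, h24, h23, h34]
      · ext x
        simp only [List.mem_toFinset, List.mem_cons, List.not_mem_nil, or_false, hZdef,
          Finset.mem_insert, Finset.mem_singleton]
        all_goals tauto
      · simp [List.Chain', List.isChain_cons, Shares]
    exact hmax.2 _ hZ' (Finset.ssubset_insert hfZ)
  -- outdeg v₄ = 1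
  have hout4 : outdeg E v₄ = 1 := by
    by_contra h
    have hmem : (v₄, v₃) ∈ E.filter (fun e => e.1 = v₄) := by simp [hm4]
    have hpos : 0 < (E.filter (fun e => e.1 = v₄)).card := Finset.card_pos.mpr ⟨_, hmem⟩
    have hlt : 1 < (E.filter (fun e => e.1 = v₄)).card := by
      rcases Nat.lt_or_ge 1 (E.filter (fun e => e.1 = v₄)).card with h' | h'
      · exact h'
      · exact absurd (by omega : (E.filter (fun e => e.1 = v₄)).card = 1) h
    obtain ⟨f, hf, hfne⟩ := Finset.exists_mem_ne hlt (v₄, v₃)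
    obtain ⟨a, b⟩ := f
    obtain ⟨hfE, hf1⟩ := Finset.mem_filter.mp hf
    simp only at hf1
    subst a
    have hb3 : b ≠ v₃ := by rintro rfl; exact hfne rfl
    have hfZ : (v₄, b) ∉ Z := by
      simp only [hZdef, Finset.mem_insert, Finset.mem_singleton, Prod.mk.injEq, not_or]
      refine ⟨fun h => h04' h.1, fun h => h24' h.1, fun h => h24' h.1, fun h => hb3 h.2⟩
    have hZ' : IsZigzagTrail E (insert (v₄, b) Z) := by
      refine ⟨Finset.insert_subset hfE hZE, [(v₀, v₁), (v₂, v₁), (v₂, v₃), (v₄, v₃), (v₄, b)],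
        by simp, ?_, ?_, ?_⟩
      · simp [List.nodup_cons, Prod.ext_iff, hb3, Ne.symm hb3, h02, h04, h13, h24, h23, h34]
      · ext x
        simp only [List.mem_toFinset, List.mem_cons, List.not_mem_nil, or_false, hZdef,
          Finset.mem_insert, Finset.mem_singleton]
        all_goals tauto
      · simp [List.Chain', List.isChain_cons, Shares]
    exact hmax.2 _ hZ' (Finset.ssubset_insert hfZ)
  -- indeg v₁, indeg v₃, outdeg v₂ are ≥ 2
  have hin1 : indeg E v₁ ≠ 1 := by
    have : 1 < indeg E v₁ := Finset.one_lt_card.mpr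
      ⟨(v₀, v₁), by simp [hm1], (v₂, v₁), by simp [hm2], by simp [Prod.ext_iff, h02]⟩
    omega
  have hin3 : indeg E v₃ ≠ 1 := by
    have : 1 < indeg E v₃ := Finset.one_lt_card.mpr
      ⟨(v₂, v₃), by simp [hm3], (v₄, v₃), by simp [hm4], by simp [Prod.ext_iff, h24]⟩
    omega
  have hout2 : outdeg E v₂ ≠ 1 := by
    have : 1 < outdeg E v₂ := Finset.one_lt_card.mpr
      ⟨(v₂, v₁), by simp [hm2], (v₂, v₃), by simp [hm3], by simp [Prod.ext_iff, h13]⟩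
    omega
  -- the two candidate sets
  have hA3 : AAdmissible E Z {(v₀, v₁), (v₂, v₃), (v₄, v₃)} := by
    refine ⟨?_, ?_, ?_⟩
    · intro e he; simp only [Finset.mem_insert, Finset.mem_singleton] at he
      simp only [hZdef, Finset.mem_insert, Finset.mem_singleton]; tauto
    · intro e he hcond
      simp only [hZdef, Finset.mem_insert, Finset.mem_singleton] at he
      rcases he with rfl | rfl | rfl | rfl
      · simp
      · exact absurd hcond (by simp [hout2, hin1])
      · simp
      · simp
    · intro a ha b hb hne hsh
      simp only [hZdef, Finset.mem_insert, Finset.mem_singleton] at ha hb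
      by_cases ha2 : a = (v₂, v₁)
      · subst ha2
        right
        rcases hb with rfl | rfl | rfl | rfl
        · simp
        · exact absurd rfl hne
        · simp
        · simp
      · left
        rcases ha with rfl | rfl | rfl | rfl
        · simp
        · exact absurd rfl ha2
        · simp
        · simp
  have hA2 : AAdmissible E Z {(v₀, v₁), (v₂, v₁), (v₄, v₃)} := by
    refine ⟨?_, ?_, ?_⟩
    · intro e he; simp only [Finset.mem_insert, Finset.mem_singleton] at he
      simp only [hZdef, Finset.mem_insert, Finset.mem_singleton]; tauto
    · intro e he hcond
      simp only [hZdef, Finset.mem_insert, Finset.mem_singleton] at he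
      rcases he with rfl | rfl | rfl | rfl
      · simp
      · simp
      · exact absurd hcond (by simp [hout2, hin3])
      · simp
    · intro a ha b hb hne hsh
      simp only [hZdef, Finset.mem_insert, Finset.mem_singleton] at ha hb
      by_cases ha2 : a = (v₂, v₃)
      · subst ha2
        right
        rcases hb with rfl | rfl | rfl | rfl
        · simp
        · simp
        · exact absurd rfl hne
        · simp
      · left
        rcases ha with rfl | rfl | rfl | rfl
        · simp
        · simp
        · exact absurd rfl ha2
        · simp
  -- every A-admissible set contains e₁, e₄ and (e₂ or e₃)
  have hchar : ∀ S, AAdmissible E Z S →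
      (v₀, v₁) ∈ S ∧ (v₄, v₃) ∈ S ∧ ((v₂, v₁) ∈ S ∨ (v₂, v₃) ∈ S) := by
    intro S hS
    obtain ⟨hsub, hC1, hC2⟩ := hS
    exact ⟨hC1 _ (by simp [hZdef]) (Or.inl hout0),
      hC1 _ (by simp [hZdef]) (Or.inl hout4),
      hC2 _ (by simp [hZdef]) _ (by simp [hZdef]) (by simp [Prod.ext_iff, h13]) (Or.inl rfl)⟩
  have hB3 : BAdmissible E Z {(v₀, v₁), (v₂, v₃), (v₄, v₃)} := by
    refine ⟨hA3, ?_⟩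
    intro S' hss hA'
    obtain ⟨m1, m4, m23⟩ := hchar S' hA'
    have hsub := hss.1
    have m3 : (v₂, v₃) ∈ S' := by
      rcases m23 with m2 | m3
      · have := hsub m2
        simp [Prod.ext_iff, h02', h13, h13', h24] at this
      · exact m3
    have : ({(v₀, v₁), (v₂, v₃), (v₄, v₃)} : Finset (V × V)) ⊆ S' := by
      intro x hx; simp only [Finset.mem_insert, Finset.mem_singleton] at hx
      rcases hx with rfl | rfl | rfl
      · exact m1
      · exact m3
      · exact m4
    exact (Finset.ssubset_iff_subset_ne.mp hss).2
      (Finset.Subset.antisymm hsub this)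
  have hB2 : BAdmissible E Z {(v₀, v₁), (v₂, v₁), (v₄, v₃)} := by
    refine ⟨hA2, ?_⟩
    intro S' hss hA'
    obtain ⟨m1, m4, m23⟩ := hchar S' hA'
    have hsub := hss.1
    have m2 : (v₂, v₁) ∈ S' := by
      rcases m23 with m2 | m3
      · exact m2
      · have := hsub m3
        simp [Prod.ext_iff, h02', h13, h13', h24] at this
    have : ({(v₀, v₁), (v₂, v₁), (v₄, v₃)} : Finset (V × V)) ⊆ S' := by
      intro x hx; simp only [Finset.mem_insert, Finset.mem_singleton] at hx
      rcases hx with rfl | rfl | rfl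
      · exact m1
      · exact m2
      · exact m4
    exact (Finset.ssubset_iff_subset_ne.mp hss).2
      (Finset.Subset.antisymm hsub this)
  refine ⟨?_, ?_, ?_⟩
  · intro S
    constructor
    · rintro ⟨hA, hmin⟩
      obtain ⟨m1, m4, m23⟩ := hchar S hA
      rcases m23 with m2 | m3
      · right
        have hsub : ({(v₀, v₁), (v₂, v₁), (v₄, v₃)} : Finset (V × V)) ⊆ S := by
          intro x hx; simp only [Finset.mem_insert, Finset.mem_singleton] at hx
          rcases hx with rfl | rfl | rfl
          · exact m1
          · exact m2
          · exact m4
        by_contra hne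
        exact hmin _ (Finset.ssubset_iff_subset_ne.mpr ⟨hsub, fun h => hne h.symm⟩) hA2
      · left
        have hsub : ({(v₀, v₁), (v₂, v₃), (v₄, v₃)} : Finset (V × V)) ⊆ S := by
          intro x hx; simp only [Finset.mem_insert, Finset.mem_singleton] at hx
          rcases hx with rfl | rfl | rfl
          · exact m1
          · exact m3
          · exact m4
        by_contra hne
        exact hmin _ (Finset.ssubset_iff_subset_ne.mpr ⟨hsub, fun h => hne h.symm⟩) hB3.1
    · rintro (rfl | rfl)
      · exact hB3
      · exact hB2
  · ext v
    simp only [Finset.mem_filter, Finset.mem_singleton, verts, hZdef, Finset.mem_union,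
      Finset.mem_image, Finset.mem_insert, Finset.mem_singleton]
    constructor
    · rintro ⟨hv, hdeg⟩
      have hvals : v = v₀ ∨ v = v₁ ∨ v = v₂ ∨ v = v₃ ∨ v = v₄ := by
        rcases hv with ⟨e, he, rfl⟩ | ⟨e, he, rfl⟩ <;>
          rcases he with rfl | rfl | rfl | rfl <;> simp
      rcases hvals with rfl | rfl | rfl | rfl | rfl
      · simp [indeg, Finset.filter_insert, Finset.filter_singleton, h01, h01', h03, h03'] at hdeg
      · simp [indeg, Finset.filter_insert, Finset.filter_singleton, h13, h13', h34, h34'] at hdeg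
      · simp [indeg, Finset.filter_insert, Finset.filter_singleton, h12, h12', h23, h23'] at hdeg
      · rfl
      · simp [indeg, Finset.filter_insert, Finset.filter_singleton, h14, h14', h34, h34'] at hdeg
    · rintro rfl
      refine ⟨Or.inr ⟨(v₂, v), by simp, rfl⟩, ?_⟩
      have hfil : Finset.filter (fun e => e.2 = v)
          ({(v₀, v₁), (v₂, v), (v₄, v)} : Finset (V × V)) = {(v₂, v), (v₄, v)} := by
        simp [Finset.filter_insert, Finset.filter_singleton, h13]
      rw [indeg, hfil, Finset.card_insert_of_notMem (by simp [Prod.ext_iff, h24]),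
        Finset.card_singleton]
  · ext v
    simp only [Finset.mem_filter, Finset.mem_singleton, verts, hZdef, Finset.mem_union,
      Finset.mem_image, Finset.mem_insert, Finset.mem_singleton]
    constructor
    · rintro ⟨hv, hdeg⟩
      have hvals : v = v₀ ∨ v = v₁ ∨ v = v₂ ∨ v = v₃ ∨ v = v₄ := by
        rcases hv with ⟨e, he, rfl⟩ | ⟨e, he, rfl⟩ <;>
          rcases he with rfl | rfl | rfl | rfl <;> simp
      rcases hvals with rfl | rfl | rfl | rfl | rfl
      · simp [indeg, Finset.filter_insert, Finset.filter_singleton, h01, h01', h03, h03'] at hdeg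
      · rfl
      · simp [indeg, Finset.filter_insert, Finset.filter_singleton, h12, h12', h23, h23'] at hdeg
      · simp [indeg, Finset.filter_insert, Finset.filter_singleton, h13, h13', h34, h34'] at hdeg
      · simp [indeg, Finset.filter_insert, Finset.filter_singleton, h14, h14', h34, h34'] at hdeg
    · rintro rfl
      refine ⟨Or.inr ⟨(v₀, v), by simp, rfl⟩, ?_⟩
      have hfil : Finset.filter (fun e => e.2 = v)
          ({(v₀, v), (v₂, v), (v₄, v₃)} : Finset (V × V)) = {(v₀, v), (v₂, v)} := by
        simp [Finset.filter_insert, Finset.filter_singleton, h13']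
      rw [indeg, hfil, Finset.card_insert_of_notMem (by simp [Prod.ext_iff, h02]),
        Finset.card_singleton]
end

section
/- Let p ≥ 1 be an integer, let N be a p-rooted almost-binary phylogenetic network on X, and let Z be a maximal zig-zag trail of N that is a W-fence of length 6, with canonical edge ordering (e_1, ..., e_6). Then E(Z) has exactly three B-admissible subsets, encoded as ⟨101011⟩, ⟨101101⟩, and ⟨110101⟩, and each of them contains both incoming edges of exactly one vertex of Z, so that each induces exactly one reticulation among the vertices of Z. -/
open Finset

variable {V : Type} [DecidableEq V] [Fintype V]

set_option maxHeartbeats 2000000 in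
/-- A maximal zig-zag trail that is a W-fence of length 6 has exactly three B-admissible
subsets, `⟨101011⟩`, `⟨101101⟩`, `⟨110101⟩`, and each of them contains both incoming edges
of exactly one vertex of `Z`, hence induces exactly one reticulation among its vertices. -/
theorem stmt16 (p : ℕ) (hp : 1 ≤ p) (X : Finset V) (hX : X.Nonempty)
    (E : Finset (V × V)) (hN : IsPhyloNet E p X)
    (v₀ v₁ v₂ v₃ v₄ v₅ v₆ : V) (hdist : ([v₀, v₁, v₂, v₃, v₄, v₅, v₆] : List V).Nodup)
    (e₁ e₂ e₃ e₄ e₅ e₆ : V × V)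
    (he₁ : e₁ = (v₀, v₁)) (he₂ : e₂ = (v₂, v₁)) (he₃ : e₃ = (v₂, v₃))
    (he₄ : e₄ = (v₄, v₃)) (he₅ : e₅ = (v₄, v₅)) (he₆ : e₆ = (v₆, v₅))
    (Z : Finset (V × V)) (hZdef : Z = {e₁, e₂, e₃, e₄, e₅, e₆})
    (hmax : IsMaximalZigzagTrail E Z) :
    (∀ S, BAdmissible E Z S ↔
      (S = {e₁, e₃, e₅, e₆} ∨ S = {e₁, e₃, e₄, e₆} ∨ S = {e₁, e₂, e₄, e₆})) ∧
    (∀ S, BAdmissible E Z S → ((verts Z).filter fun v => indeg S v = 2).card = 1) := by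
  subst he₁ he₂ he₃ he₄ he₅ he₆ hZdef
  simp only [List.nodup_cons, List.mem_cons, List.mem_singleton, List.not_mem_nil,
    or_false, not_or, List.nodup_nil, and_true] at hdist
  obtain ⟨⟨h01, h02, h03, h04, h05, h06⟩, ⟨h12, h13, h14, h15, h16⟩, ⟨h23, h24, h25, h26⟩, ⟨h34, h35, h36⟩, ⟨h45, h46⟩, ⟨h56, -⟩⟩ := hdist
  have s10 := Ne.symm h01
  have s20 := Ne.symm h02
  have s30 := Ne.symm h03
  have s40 := Ne.symm h04
  have s50 := Ne.symm h05
  have s60 := Ne.symm h06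
  have s21 := Ne.symm h12
  have s31 := Ne.symm h13
  have s41 := Ne.symm h14
  have s51 := Ne.symm h15
  have s61 := Ne.symm h16
  have s32 := Ne.symm h23
  have s42 := Ne.symm h24
  have s52 := Ne.symm h25
  have s62 := Ne.symm h26
  have s43 := Ne.symm h34
  have s53 := Ne.symm h35
  have s63 := Ne.symm h36
  have s54 := Ne.symm h45
  have s64 := Ne.symm h46
  have s65 := Ne.symm h56
  have hZE := hmax.1.1
  have m1 : (v₀, v₁) ∈ E := hZE (by simp)
  have m2 : (v₂, v₁) ∈ E := hZE (by simp)
  have m3 : (v₂, v₃) ∈ E := hZE (by simp)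
  have m4 : (v₄, v₃) ∈ E := hZE (by simp)
  have m5 : (v₄, v₅) ∈ E := hZE (by simp)
  have m6 : (v₆, v₅) ∈ E := hZE (by simp)
  -- out-degree of v₀ is 1
  have hout0 : outdeg E v₀ = 1 := by
    by_contra h
    have hmem : (v₀, v₁) ∈ E.filter (fun e => e.1 = v₀) := by simp [m1]
    have hpos : 0 < (E.filter (fun e => e.1 = v₀)).card := Finset.card_pos.mpr ⟨_, hmem⟩
    have h2 : 1 < (E.filter (fun e => e.1 = v₀)).card := by
      have : outdeg E v₀ = (E.filter (fun e => e.1 = v₀)).card := rfl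
      omega
    obtain ⟨f, hf, hfne⟩ := Finset.exists_mem_ne h2 (v₀, v₁)
    have hfE : f ∈ E := (Finset.mem_filter.mp hf).1
    have hf1 : f.1 = v₀ := (Finset.mem_filter.mp hf).2
    have hfZ : f ∉ ({(v₀, v₁), (v₂, v₁), (v₂, v₃), (v₄, v₃), (v₄, v₅), (v₆, v₅)} : Finset (V × V)) := by
      simp only [Finset.mem_insert, Finset.mem_singleton]
      rintro (rfl|rfl|rfl|rfl|rfl|rfl) <;> simp_all
    refine hmax.2 (insert f {(v₀, v₁), (v₂, v₁), (v₂, v₃), (v₄, v₃), (v₄, v₅), (v₆, v₅)})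
      ⟨Finset.insert_subset hfE hZE,
       [f, (v₀, v₁), (v₂, v₁), (v₂, v₃), (v₄, v₃), (v₄, v₅), (v₆, v₅)], by simp, ?_, by simp, ?_⟩
      (Finset.ssubset_insert hfZ)
    · simp only [Finset.mem_insert, Finset.mem_singleton, not_or] at hfZ
      simp [List.nodup_cons, Prod.ext_iff, h01, h02, h03, h04, h05, h06, h12, h13, h14, h15, h16, h23, h24, h25, h26, h34, h35, h36, h45, h46, h56, s10, s20, s30, s40, s50, s60, s21, s31, s41, s51, s61, s32, s42, s52, s62, s43, s53, s63, s54, s64, s65, hfZ.1, hfZ.2.1, hfZ.2.2.1, hfZ.2.2.2.1,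
        hfZ.2.2.2.2.1, hfZ.2.2.2.2.2]
    · simp [List.Chain', List.isChain_cons_cons, Shares, hf1]
  -- out-degree of v₆ is 1
  have hout6 : outdeg E v₆ = 1 := by
    by_contra h
    have hmem : (v₆, v₅) ∈ E.filter (fun e => e.1 = v₆) := by simp [m6]
    have hpos : 0 < (E.filter (fun e => e.1 = v₆)).card := Finset.card_pos.mpr ⟨_, hmem⟩
    have h2 : 1 < (E.filter (fun e => e.1 = v₆)).card := by
      have : outdeg E v₆ = (E.filter (fun e => e.1 = v₆)).card := rfl
      omega
    obtain ⟨f, hf, hfne⟩ := Finset.exists_mem_ne h2 (v₆, v₅)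
    have hfE : f ∈ E := (Finset.mem_filter.mp hf).1
    have hf1 : f.1 = v₆ := (Finset.mem_filter.mp hf).2
    have hfZ : f ∉ ({(v₀, v₁), (v₂, v₁), (v₂, v₃), (v₄, v₃), (v₄, v₅), (v₆, v₅)} : Finset (V × V)) := by
      simp only [Finset.mem_insert, Finset.mem_singleton]
      rintro (rfl|rfl|rfl|rfl|rfl|rfl) <;> simp_all
    refine hmax.2 (insert f {(v₀, v₁), (v₂, v₁), (v₂, v₃), (v₄, v₃), (v₄, v₅), (v₆, v₅)})
      ⟨Finset.insert_subset hfE hZE,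
       [(v₀, v₁), (v₂, v₁), (v₂, v₃), (v₄, v₃), (v₄, v₅), (v₆, v₅), f], by simp, ?_, ?_, ?_⟩
      (Finset.ssubset_insert hfZ)
    · simp only [Finset.mem_insert, Finset.mem_singleton, not_or] at hfZ
      simp [List.nodup_cons, Prod.ext_iff, h01, h02, h03, h04, h05, h06, h12, h13, h14, h15, h16, h23, h24, h25, h26, h34, h35, h36, h45, h46, h56, s10, s20, s30, s40, s50, s60, s21, s31, s41, s51, s61, s32, s42, s52, s62, s43, s53, s63, s54, s64, s65, Ne.symm hfZ.1, Ne.symm hfZ.2.1,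
        Ne.symm hfZ.2.2.1, Ne.symm hfZ.2.2.2.1, Ne.symm hfZ.2.2.2.2.1, Ne.symm hfZ.2.2.2.2.2]
    · ext x
      simp only [List.mem_toFinset, List.mem_cons, List.not_mem_nil, or_false,
        Finset.mem_insert, Finset.mem_singleton]
      tauto
    · simp [List.Chain', List.isChain_cons_cons, Shares, hf1]
  -- lower degree bounds for internal vertices
  have hin1 : 1 < indeg E v₁ := Finset.one_lt_card.mpr
    ⟨(v₀, v₁), by simp [m1], (v₂, v₁), by simp [m2], by simp [Prod.ext_iff, h02]⟩
  have hin3 : 1 < indeg E v₃ := Finset.one_lt_card.mpr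
    ⟨(v₂, v₃), by simp [m3], (v₄, v₃), by simp [m4], by simp [Prod.ext_iff, h24]⟩
  have hin5 : 1 < indeg E v₅ := Finset.one_lt_card.mpr
    ⟨(v₄, v₅), by simp [m5], (v₆, v₅), by simp [m6], by simp [Prod.ext_iff, h46]⟩
  have hout2 : 1 < outdeg E v₂ := Finset.one_lt_card.mpr
    ⟨(v₂, v₁), by simp [m2], (v₂, v₃), by simp [m3], by simp [Prod.ext_iff, h13]⟩
  have hout4 : 1 < outdeg E v₄ := Finset.one_lt_card.mpr
    ⟨(v₄, v₃), by simp [m4], (v₄, v₅), by simp [m5], by simp [Prod.ext_iff, h35]⟩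
  -- characterization of A-admissibility
  have hAiff : ∀ S, AAdmissible E {(v₀, v₁), (v₂, v₁), (v₂, v₃), (v₄, v₃), (v₄, v₅), (v₆, v₅)} S ↔
      (S ⊆ {(v₀, v₁), (v₂, v₁), (v₂, v₃), (v₄, v₃), (v₄, v₅), (v₆, v₅)} ∧
       (v₀, v₁) ∈ S ∧ (v₆, v₅) ∈ S ∧ ((v₂, v₁) ∈ S ∨ (v₂, v₃) ∈ S) ∧
       ((v₂, v₃) ∈ S ∨ (v₄, v₃) ∈ S) ∧ ((v₄, v₃) ∈ S ∨ (v₄, v₅) ∈ S)) := by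
    intro S
    constructor
    · rintro ⟨hsub, hC1, hC2⟩
      refine ⟨hsub, hC1 _ (by simp) (Or.inl hout0), hC1 _ (by simp) (Or.inl hout6),
        hC2 _ (by simp) _ (by simp) (by simp [Prod.ext_iff, h13]) (Or.inl rfl),
        hC2 _ (by simp) _ (by simp) (by simp [Prod.ext_iff, h24]) (Or.inr rfl),
        hC2 _ (by simp) _ (by simp) (by simp [Prod.ext_iff, h35]) (Or.inl rfl)⟩
    · rintro ⟨hsub, hm1, hm6, hc23, hc34, hc45⟩
      refine ⟨hsub, ?_, ?_⟩
      · intro e he hdeg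
        simp only [Finset.mem_insert, Finset.mem_singleton] at he
        rcases he with rfl|rfl|rfl|rfl|rfl|rfl
        · exact hm1
        · exfalso
          rcases hdeg with h|h
          · have h' : outdeg E v₂ = 1 := h
            omega
          · have h' : indeg E v₁ = 1 := h
            omega
        · exfalso
          rcases hdeg with h|h
          · have h' : outdeg E v₂ = 1 := h
            omega
          · have h' : indeg E v₃ = 1 := h
            omega
        · exfalso
          rcases hdeg with h|h
          · have h' : outdeg E v₄ = 1 := h
            omega
          · have h' : indeg E v₃ = 1 := h
            omega
        · exfalso
          rcases hdeg with h|h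
          · have h' : outdeg E v₄ = 1 := h
            omega
          · have h' : indeg E v₅ = 1 := h
            omega
        · exact hm6
      · intro a ha b hb hne hsh
        simp only [Finset.mem_insert, Finset.mem_singleton] at ha hb
        rcases ha with rfl|rfl|rfl|rfl|rfl|rfl <;> rcases hb with rfl|rfl|rfl|rfl|rfl|rfl <;>
          first
          | exact absurd rfl hne
          | (simp only [Shares] at hsh; tauto)
  -- the three candidate sets are A-admissible
  have hA1 : AAdmissible E {(v₀, v₁), (v₂, v₁), (v₂, v₃), (v₄, v₃), (v₄, v₅), (v₆, v₅)}
      {(v₀, v₁), (v₂, v₃), (v₄, v₅), (v₆, v₅)} := by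
    rw [hAiff]
    refine ⟨?_, by simp, by simp, by simp, by simp, by simp⟩
    intro x hx; simp only [Finset.mem_insert, Finset.mem_singleton] at hx
    rcases hx with rfl|rfl|rfl|rfl <;> simp
  have hA2 : AAdmissible E {(v₀, v₁), (v₂, v₁), (v₂, v₃), (v₄, v₃), (v₄, v₅), (v₆, v₅)}
      {(v₀, v₁), (v₂, v₃), (v₄, v₃), (v₆, v₅)} := by
    rw [hAiff]
    refine ⟨?_, by simp, by simp, by simp, by simp, by simp⟩
    intro x hx; simp only [Finset.mem_insert, Finset.mem_singleton] at hx
    rcases hx with rfl|rfl|rfl|rfl <;> simp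
  have hA3 : AAdmissible E {(v₀, v₁), (v₂, v₁), (v₂, v₃), (v₄, v₃), (v₄, v₅), (v₆, v₅)}
      {(v₀, v₁), (v₂, v₁), (v₄, v₃), (v₆, v₅)} := by
    rw [hAiff]
    refine ⟨?_, by simp, by simp, by simp, by simp, by simp⟩
    intro x hx; simp only [Finset.mem_insert, Finset.mem_singleton] at hx
    rcases hx with rfl|rfl|rfl|rfl <;> simp
  -- main characterization of B-admissible subsets
  have key : ∀ S, BAdmissible E {(v₀, v₁), (v₂, v₁), (v₂, v₃), (v₄, v₃), (v₄, v₅), (v₆, v₅)} S ↔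
      (S = {(v₀, v₁), (v₂, v₃), (v₄, v₅), (v₆, v₅)} ∨
       S = {(v₀, v₁), (v₂, v₃), (v₄, v₃), (v₆, v₅)} ∨
       S = {(v₀, v₁), (v₂, v₁), (v₄, v₃), (v₆, v₅)}) := by
    intro S
    constructor
    · rintro ⟨hA, hmin⟩
      rw [hAiff] at hA
      obtain ⟨hsub, hm1, hm6, hc23, hc34, hc45⟩ := hA
      by_cases h3 : (v₂, v₃) ∈ S
      · by_cases h5 : (v₄, v₅) ∈ S
        · left
          have hCS : ({(v₀, v₁), (v₂, v₃), (v₄, v₅), (v₆, v₅)} : Finset (V × V)) ⊆ S := by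
            simp [Finset.insert_subset_iff, hm1, h3, h5, hm6]
          by_contra hne'
          exact hmin _ (Finset.ssubset_iff_subset_ne.mpr ⟨hCS, fun h => hne' h.symm⟩) hA1
        · have h4 : (v₄, v₃) ∈ S := hc45.resolve_right h5
          right; left
          have hCS : ({(v₀, v₁), (v₂, v₃), (v₄, v₃), (v₆, v₅)} : Finset (V × V)) ⊆ S := by
            simp [Finset.insert_subset_iff, hm1, h3, h4, hm6]
          by_contra hne'
          exact hmin _ (Finset.ssubset_iff_subset_ne.mpr ⟨hCS, fun h => hne' h.symm⟩) hA2
      · have h2 : (v₂, v₁) ∈ S := hc23.resolve_right h3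
        have h4 : (v₄, v₃) ∈ S := hc34.resolve_left h3
        right; right
        have hCS : ({(v₀, v₁), (v₂, v₁), (v₄, v₃), (v₆, v₅)} : Finset (V × V)) ⊆ S := by
          simp [Finset.insert_subset_iff, hm1, h2, h4, hm6]
        by_contra hne'
        exact hmin _ (Finset.ssubset_iff_subset_ne.mpr ⟨hCS, fun h => hne' h.symm⟩) hA3
    · rintro (rfl|rfl|rfl)
      · refine ⟨hA1, ?_⟩
        intro S' hss hA'
        rw [hAiff] at hA'
        obtain ⟨-, hm1', hm6', hc23', hc34', hc45'⟩ := hA'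
        obtain ⟨x, hx, hxnot⟩ := Finset.exists_of_ssubset hss
        simp only [Finset.mem_insert, Finset.mem_singleton] at hx
        rcases hx with rfl|rfl|rfl|rfl
        · exact hxnot hm1'
        · rcases hc23' with h|h
          · have := hss.subset h
            simp [Prod.ext_iff, h01, h02, h03, h04, h05, h06, h12, h13, h14, h15, h16, h23, h24, h25, h26, h34, h35, h36, h45, h46, h56, s10, s20, s30, s40, s50, s60, s21, s31, s41, s51, s61, s32, s42, s52, s62, s43, s53, s63, s54, s64, s65] at this
          · exact hxnot h
        · rcases hc45' with h|h
          · have := hss.subset h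
            simp [Prod.ext_iff, h01, h02, h03, h04, h05, h06, h12, h13, h14, h15, h16, h23, h24, h25, h26, h34, h35, h36, h45, h46, h56, s10, s20, s30, s40, s50, s60, s21, s31, s41, s51, s61, s32, s42, s52, s62, s43, s53, s63, s54, s64, s65] at this
          · exact hxnot h
        · exact hxnot hm6'
      · refine ⟨hA2, ?_⟩
        intro S' hss hA'
        rw [hAiff] at hA'
        obtain ⟨-, hm1', hm6', hc23', hc34', hc45'⟩ := hA'
        obtain ⟨x, hx, hxnot⟩ := Finset.exists_of_ssubset hss
        simp only [Finset.mem_insert, Finset.mem_singleton] at hx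
        rcases hx with rfl|rfl|rfl|rfl
        · exact hxnot hm1'
        · rcases hc23' with h|h
          · have := hss.subset h
            simp [Prod.ext_iff, h01, h02, h03, h04, h05, h06, h12, h13, h14, h15, h16, h23, h24, h25, h26, h34, h35, h36, h45, h46, h56, s10, s20, s30, s40, s50, s60, s21, s31, s41, s51, s61, s32, s42, s52, s62, s43, s53, s63, s54, s64, s65] at this
          · exact hxnot h
        · rcases hc45' with h|h
          · exact hxnot h
          · have := hss.subset h
            simp [Prod.ext_iff, h01, h02, h03, h04, h05, h06, h12, h13, h14, h15, h16, h23, h24, h25, h26, h34, h35, h36, h45, h46, h56, s10, s20, s30, s40, s50, s60, s21, s31, s41, s51, s61, s32, s42, s52, s62, s43, s53, s63, s54, s64, s65] at this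
        · exact hxnot hm6'
      · refine ⟨hA3, ?_⟩
        intro S' hss hA'
        rw [hAiff] at hA'
        obtain ⟨-, hm1', hm6', hc23', hc34', hc45'⟩ := hA'
        obtain ⟨x, hx, hxnot⟩ := Finset.exists_of_ssubset hss
        simp only [Finset.mem_insert, Finset.mem_singleton] at hx
        rcases hx with rfl|rfl|rfl|rfl
        · exact hxnot hm1'
        · rcases hc23' with h|h
          · exact hxnot h
          · have := hss.subset h
            simp [Prod.ext_iff, h01, h02, h03, h04, h05, h06, h12, h13, h14, h15, h16, h23, h24, h25, h26, h34, h35, h36, h45, h46, h56, s10, s20, s30, s40, s50, s60, s21, s31, s41, s51, s61, s32, s42, s52, s62, s43, s53, s63, s54, s64, s65] at this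
        · rcases hc45' with h|h
          · exact hxnot h
          · have := hss.subset h
            simp [Prod.ext_iff, h01, h02, h03, h04, h05, h06, h12, h13, h14, h15, h16, h23, h24, h25, h26, h34, h35, h36, h45, h46, h56, s10, s20, s30, s40, s50, s60, s21, s31, s41, s51, s61, s32, s42, s52, s62, s43, s53, s63, s54, s64, s65] at this
        · exact hxnot hm6'
  refine ⟨key, ?_⟩
  have hverts : verts ({(v₀, v₁), (v₂, v₁), (v₂, v₃), (v₄, v₃), (v₄, v₅), (v₆, v₅)} : Finset (V × V))
      = {v₀, v₁, v₂, v₃, v₄, v₅, v₆} := by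
    ext v
    simp only [verts, Finset.mem_union, Finset.mem_image, Finset.mem_insert, Finset.mem_singleton]
    constructor
    · rintro (⟨a, (rfl|rfl|rfl|rfl|rfl|rfl), rfl⟩ | ⟨a, (rfl|rfl|rfl|rfl|rfl|rfl), rfl⟩) <;> simp
    · rintro (rfl|rfl|rfl|rfl|rfl|rfl|rfl)
      · exact Or.inl ⟨(v, v₁), by simp⟩
      · exact Or.inr ⟨(v₀, v), by simp⟩
      · exact Or.inl ⟨(v, v₁), by simp⟩
      · exact Or.inr ⟨(v₂, v), by simp⟩
      · exact Or.inl ⟨(v, v₃), by simp⟩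
      · exact Or.inr ⟨(v₄, v), by simp⟩
      · exact Or.inl ⟨(v, v₅), by simp⟩
  intro S hB
  rw [hverts]
  rcases (key S).mp hB with rfl|rfl|rfl
  · have hfil : Finset.filter
        (fun v => indeg ({(v₀, v₁), (v₂, v₃), (v₄, v₅), (v₆, v₅)} : Finset (V × V)) v = 2)
        {v₀, v₁, v₂, v₃, v₄, v₅, v₆} = {v₅} := by
      simp [indeg, Finset.filter_insert, Finset.filter_singleton, Prod.ext_iff,
        Finset.card_insert_of_notMem, h01, h02, h03, h04, h05, h06, h12, h13, h14, h15, h16, h23, h24, h25, h26, h34, h35, h36, h45, h46, h56, s10, s20, s30, s40, s50, s60, s21, s31, s41, s51, s61, s32, s42, s52, s62, s43, s53, s63, s54, s64, s65]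
    rw [hfil, Finset.card_singleton]
  · have hfil : Finset.filter
        (fun v => indeg ({(v₀, v₁), (v₂, v₃), (v₄, v₃), (v₆, v₅)} : Finset (V × V)) v = 2)
        {v₀, v₁, v₂, v₃, v₄, v₅, v₆} = {v₃} := by
      simp [indeg, Finset.filter_insert, Finset.filter_singleton, Prod.ext_iff,
        Finset.card_insert_of_notMem, h01, h02, h03, h04, h05, h06, h12, h13, h14, h15, h16, h23, h24, h25, h26, h34, h35, h36, h45, h46, h56, s10, s20, s30, s40, s50, s60, s21, s31, s41, s51, s61, s32, s42, s52, s62, s43, s53, s63, s54, s64, s65]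
    rw [hfil, Finset.card_singleton]
  · have hfil : Finset.filter
        (fun v => indeg ({(v₀, v₁), (v₂, v₁), (v₄, v₃), (v₆, v₅)} : Finset (V × V)) v = 2)
        {v₀, v₁, v₂, v₃, v₄, v₅, v₆} = {v₁} := by
      simp [indeg, Finset.filter_insert, Finset.filter_singleton, Prod.ext_iff,
        Finset.card_insert_of_notMem, h01, h02, h03, h04, h05, h06, h12, h13, h14, h15, h16, h23, h24, h25, h26, h34, h35, h36, h45, h46, h56, s10, s20, s30, s40, s50, s60, s21, s31, s41, s51, s61, s32, s42, s52, s62, s43, s53, s63, s54, s64, s65]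
    rw [hfil, Finset.card_singleton]
end

section
/- Let p ≥ 1 be an integer, let N be a p-rooted almost-binary phylogenetic network on X, and let Z be a maximal zig-zag trail of N that is an M-fence of length 4, with canonical edge ordering (e_1, e_2, e_3, e_4). Then E(Z) has exactly two B-admissible subsets, encoded as ⟨1011⟩ and ⟨1101⟩, and neither of them contains both incoming edges of any vertex of Z; hence neither induces any reticulation among the vertices of Z. -/
open Finset

variable {V : Type} [DecidableEq V] [Fintype V]

set_option maxHeartbeats 1000000

/-- A maximal zig-zag trail that is an M-fence of length 4, `v₀ < v₁ > v₂ < v₃ > v₄`, has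
exactly two B-admissible subsets, `⟨1011⟩` and `⟨1101⟩`, and neither contains both incoming
edges of any vertex of `Z`; hence neither induces any reticulation among its vertices. -/
theorem stmt17 (p : ℕ) (hp : 1 ≤ p) (X : Finset V) (hX : X.Nonempty)
    (E : Finset (V × V)) (hN : IsPhyloNet E p X)
    (v₀ v₁ v₂ v₃ v₄ : V) (hdist : ([v₀, v₁, v₂, v₃, v₄] : List V).Nodup)
    (e₁ e₂ e₃ e₄ : V × V)
    (he₁ : e₁ = (v₁, v₀)) (he₂ : e₂ = (v₁, v₂)) (he₃ : e₃ = (v₃, v₂)) (he₄ : e₄ = (v₃, v₄))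
    (Z : Finset (V × V)) (hZdef : Z = {e₁, e₂, e₃, e₄})
    (hmax : IsMaximalZigzagTrail E Z) :
    (∀ S, BAdmissible E Z S ↔ (S = {e₁, e₃, e₄} ∨ S = {e₁, e₂, e₄})) ∧
    (∀ S, BAdmissible E Z S → ∀ v ∈ verts Z, indeg S v ≠ 2) := by
  subst he₁ he₂ he₃ he₄ hZdef
  have hne : v₀ ≠ v₁ ∧ v₀ ≠ v₂ ∧ v₀ ≠ v₃ ∧ v₀ ≠ v₄ ∧ v₁ ≠ v₂ ∧ v₁ ≠ v₃ ∧ v₁ ≠ v₄ ∧ v₂ ≠ v₃ ∧ v₂ ≠ v₄ ∧ v₃ ≠ v₄ := by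
    simp only [List.nodup_cons, List.mem_cons, List.mem_singleton, List.not_mem_nil,
      or_false, List.nodup_nil] at hdist
    tauto
  obtain ⟨h01, h02, h03, h04, h12, h13, h14, h23, h24, h34⟩ := hne
  set Z : Finset (V × V) := {(v₁, v₀), (v₁, v₂), (v₃, v₂), (v₃, v₄)} with hZdef
  have hZE : Z ⊆ E := hmax.1.1
  have hE1 : (v₁, v₀) ∈ E := hZE (by simp [hZdef])
  have hE2 : (v₁, v₂) ∈ E := hZE (by simp [hZdef])
  have hE3 : (v₃, v₂) ∈ E := hZE (by simp [hZdef])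
  have hE4 : (v₃, v₄) ∈ E := hZE (by simp [hZdef])
  have hd12 : ((v₁, v₀) : V × V) ≠ (v₁, v₂) := by simp [Prod.ext_iff]; tauto
  have hd13 : ((v₁, v₀) : V × V) ≠ (v₃, v₂) := by simp [Prod.ext_iff]; tauto
  have hd14 : ((v₁, v₀) : V × V) ≠ (v₃, v₄) := by simp [Prod.ext_iff]; tauto
  have hd23 : ((v₁, v₂) : V × V) ≠ (v₃, v₂) := by simp [Prod.ext_iff]; tauto
  have hd24 : ((v₁, v₂) : V × V) ≠ (v₃, v₄) := by simp [Prod.ext_iff]; tauto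
  have hd34 : ((v₃, v₂) : V × V) ≠ (v₃, v₄) := by simp [Prod.ext_iff]; tauto
  -- maximality: every edge into v₀ is (v₁, v₀)
  have hhead0 : ∀ f ∈ E, f.2 = v₀ → f = (v₁, v₀) := by
    intro f hf hfv
    by_contra hne
    have hf1 : f ≠ (v₁, v₂) := fun h => h02 (by rw [← hfv, h])
    have hf2 : f ≠ (v₃, v₂) := fun h => h02 (by rw [← hfv, h])
    have hf3 : f ≠ (v₃, v₄) := fun h => h04 (by rw [← hfv, h])
    have hfZ : f ∉ Z := by simp [hZdef, hne, hf1, hf2, hf3]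
    refine hmax.2 (insert f Z) ⟨insert_subset hf hZE,
      [f, (v₁, v₀), (v₁, v₂), (v₃, v₂), (v₃, v₄)], by simp, ?_, ?_, ?_⟩
      (Finset.ssubset_insert hfZ)
    · simp only [List.nodup_cons, List.mem_cons, List.not_mem_nil, or_false,
        List.mem_singleton, List.nodup_nil, and_true, not_or]
      tauto
    · simp [hZdef]
    · exact List.isChain_cons_cons.mpr ⟨Or.inr hfv, List.isChain_cons_cons.mpr ⟨Or.inl rfl,
        List.isChain_cons_cons.mpr ⟨Or.inr rfl, List.isChain_cons_cons.mpr ⟨Or.inl rfl,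
        List.isChain_singleton _⟩⟩⟩⟩
  have hhead4 : ∀ f ∈ E, f.2 = v₄ → f = (v₃, v₄) := by
    intro f hf hfv
    by_contra hne
    have hf1 : f ≠ (v₁, v₀) := fun h => h04 (by rw [← hfv, h])
    have hf2 : f ≠ (v₁, v₂) := fun h => h24 (by rw [h] at hfv; exact hfv)
    have hf3 : f ≠ (v₃, v₂) := fun h => h24 (by rw [h] at hfv; exact hfv)
    have hfZ : f ∉ Z := by simp [hZdef, hne, hf1, hf2, hf3]
    refine hmax.2 (insert f Z) ⟨insert_subset hf hZE,
      [f, (v₃, v₄), (v₃, v₂), (v₁, v₂), (v₁, v₀)], by simp, ?_, ?_, ?_⟩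
      (Finset.ssubset_insert hfZ)
    · simp only [List.nodup_cons, List.mem_cons, List.not_mem_nil, or_false,
        List.mem_singleton, List.nodup_nil, and_true, not_or]
      tauto
    · ext x; simp [hZdef]; tauto
    · exact List.isChain_cons_cons.mpr ⟨Or.inr hfv, List.isChain_cons_cons.mpr ⟨Or.inl rfl,
        List.isChain_cons_cons.mpr ⟨Or.inr rfl, List.isChain_cons_cons.mpr ⟨Or.inl rfl,
        List.isChain_singleton _⟩⟩⟩⟩
  have hind0 : indeg E v₀ = 1 := by
    have : E.filter (fun e => e.2 = v₀) = {(v₁, v₀)} := by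
      apply Finset.eq_singleton_iff_unique_mem.mpr
      refine ⟨by simp [hE1], fun f hf => ?_⟩
      simp only [Finset.mem_filter] at hf
      exact hhead0 f hf.1 hf.2
    simp [indeg, this]
  have hind4 : indeg E v₄ = 1 := by
    have : E.filter (fun e => e.2 = v₄) = {(v₃, v₄)} := by
      apply Finset.eq_singleton_iff_unique_mem.mpr
      refine ⟨by simp [hE4], fun f hf => ?_⟩
      simp only [Finset.mem_filter] at hf
      exact hhead4 f hf.1 hf.2
    simp [indeg, this]
  -- outdeg v₁ ≥ 2, indeg v₂ ≥ 2, outdeg v₃ ≥ 2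
  have hout1 : outdeg E v₁ ≠ 1 := by
    have hsub : ({(v₁, v₀), (v₁, v₂)} : Finset (V × V)) ⊆ E.filter (fun e => e.1 = v₁) := by
      intro f hf
      simp only [Finset.mem_insert, Finset.mem_singleton] at hf
      rcases hf with rfl | rfl <;> simp [Finset.mem_filter, hE1, hE2]
    have h2 : 2 ≤ outdeg E v₁ := by
      have := Finset.card_le_card hsub
      rwa [Finset.card_insert_of_notMem (by simp [hd12]), Finset.card_singleton] at this
    omega
  have hout3 : outdeg E v₃ ≠ 1 := by
    have hsub : ({(v₃, v₂), (v₃, v₄)} : Finset (V × V)) ⊆ E.filter (fun e => e.1 = v₃) := by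
      intro f hf
      simp only [Finset.mem_insert, Finset.mem_singleton] at hf
      rcases hf with rfl | rfl <;> simp [Finset.mem_filter, hE3, hE4]
    have h2 : 2 ≤ outdeg E v₃ := by
      have := Finset.card_le_card hsub
      rwa [Finset.card_insert_of_notMem (by simp [hd34]), Finset.card_singleton] at this
    omega
  have hin2 : indeg E v₂ ≠ 1 := by
    have hsub : ({(v₁, v₂), (v₃, v₂)} : Finset (V × V)) ⊆ E.filter (fun e => e.2 = v₂) := by
      intro f hf
      simp only [Finset.mem_insert, Finset.mem_singleton] at hf
      rcases hf with rfl | rfl <;> simp [Finset.mem_filter, hE2, hE3]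
    have h2 : 2 ≤ indeg E v₂ := by
      have := Finset.card_le_card hsub
      rwa [Finset.card_insert_of_notMem (by simp [hd23]), Finset.card_singleton] at this
    omega
  -- every A-admissible set contains e₁ and e₄, and e₂ or e₃
  have hforce : ∀ S, AAdmissible E Z S →
      (v₁, v₀) ∈ S ∧ (v₃, v₄) ∈ S ∧ ((v₁, v₂) ∈ S ∨ (v₃, v₂) ∈ S) := by
    intro S hS
    refine ⟨hS.2.1 _ (by simp [hZdef]) (Or.inr hind0),
      hS.2.1 _ (by simp [hZdef]) (Or.inr hind4),
      hS.2.2 _ (by simp [hZdef]) _ (by simp [hZdef]) hd23 (Or.inr rfl)⟩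
  -- the two candidate sets are A-admissible
  have hA : ∀ S : Finset (V × V),
      (v₁, v₀) ∈ S → (v₃, v₄) ∈ S → ((v₁, v₂) ∈ S ∨ (v₃, v₂) ∈ S) → S ⊆ Z →
      AAdmissible E Z S := by
    intro S h1 h4 h23' hSZ
    refine ⟨hSZ, ?_, ?_⟩
    · intro e heZ hcond
      simp only [hZdef, Finset.mem_insert, Finset.mem_singleton] at heZ
      rcases heZ with rfl | rfl | rfl | rfl
      · exact h1
      · exact absurd hcond (by simp [hout1, hin2])
      · exact absurd hcond (by simp [hout3, hin2])
      · exact h4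
    · intro f₁ hf₁ f₂ hf₂ hne hsh
      simp only [hZdef, Finset.mem_insert, Finset.mem_singleton] at hf₁ hf₂
      rcases hf₁ with rfl | rfl | rfl | rfl <;> rcases hf₂ with rfl | rfl | rfl | rfl <;>
        first
          | exact absurd rfl hne
          | exact Or.inl h1
          | exact Or.inr h1
          | exact Or.inl h4
          | exact Or.inr h4
          | exact h23'
          | exact h23'.symm
  have key : ∀ S, BAdmissible E Z S ↔
      (S = {(v₁, v₀), (v₃, v₂), (v₃, v₄)} ∨ S = {(v₁, v₀), (v₁, v₂), (v₃, v₄)}) := by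
    intro S
    constructor
    · rintro ⟨hSA, hSmin⟩
      have hSZ := hSA.1
      obtain ⟨h1, h4, h23'⟩ := hforce S hSA
      have hchar : ∀ f ∈ S, f = (v₁, v₀) ∨ f = (v₁, v₂) ∨ f = (v₃, v₂) ∨ f = (v₃, v₄) := by
        intro f hf
        have := hSZ hf
        simpa [hZdef] using this
      by_cases h2 : (v₁, v₂) ∈ S
      · by_cases h3 : (v₃, v₂) ∈ S
        · exfalso
          refine hSmin {(v₁, v₀), (v₁, v₂), (v₃, v₄)} ⟨?_, fun hrev => ?_⟩
            (hA _ (by simp) (by simp) (Or.inl (by simp)) (by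
              intro f hf
              simp only [Finset.mem_insert, Finset.mem_singleton] at hf
              rcases hf with rfl | rfl | rfl <;> simp [hZdef]))
          · intro f hf
            simp only [Finset.mem_insert, Finset.mem_singleton] at hf
            rcases hf with rfl | rfl | rfl <;> assumption
          · have := hrev h3
            simp only [Finset.mem_insert, Finset.mem_singleton, Prod.ext_iff] at this
            tauto
        · right
          apply Finset.Subset.antisymm
          · intro f hf
            rcases hchar f hf with rfl | rfl | rfl | rfl
            · simp
            · simp
            · exact absurd hf h3
            · simp
          · intro f hf
            simp only [Finset.mem_insert, Finset.mem_singleton] at hf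
            rcases hf with rfl | rfl | rfl <;> assumption
      · have h3 : (v₃, v₂) ∈ S := h23'.resolve_left h2
        left
        apply Finset.Subset.antisymm
        · intro f hf
          rcases hchar f hf with rfl | rfl | rfl | rfl
          · simp
          · exact absurd hf h2
          · simp
          · simp
        · intro f hf
          simp only [Finset.mem_insert, Finset.mem_singleton] at hf
          rcases hf with rfl | rfl | rfl <;> assumption
    · rintro (rfl | rfl)
      · refine ⟨hA _ (by simp) (by simp) (Or.inr (by simp)) ?_, ?_⟩
        · intro f hf
          simp only [Finset.mem_insert, Finset.mem_singleton] at hf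
          rcases hf with rfl | rfl | rfl <;> simp [hZdef]
        · intro S' hS' hS'A
          obtain ⟨h1, h4, h23'⟩ := hforce S' hS'A
          have h2 : (v₁, v₂) ∉ S' := fun h => by
            have := hS'.1 h
            simp only [Finset.mem_insert, Finset.mem_singleton, Prod.ext_iff] at this
            tauto
          have h3 : (v₃, v₂) ∈ S' := h23'.resolve_left h2
          refine hS'.2 fun f hf => ?_
          simp only [Finset.mem_insert, Finset.mem_singleton] at hf
          rcases hf with rfl | rfl | rfl <;> assumption
      · refine ⟨hA _ (by simp) (by simp) (Or.inl (by simp)) ?_, ?_⟩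
        · intro f hf
          simp only [Finset.mem_insert, Finset.mem_singleton] at hf
          rcases hf with rfl | rfl | rfl <;> simp [hZdef]
        · intro S' hS' hS'A
          obtain ⟨h1, h4, h23'⟩ := hforce S' hS'A
          have h3 : (v₃, v₂) ∉ S' := fun h => by
            have := hS'.1 h
            simp only [Finset.mem_insert, Finset.mem_singleton, Prod.ext_iff] at this
            tauto
          have h2 : (v₁, v₂) ∈ S' := h23'.resolve_right h3
          refine hS'.2 fun f hf => ?_
          simp only [Finset.mem_insert, Finset.mem_singleton] at hf
          rcases hf with rfl | rfl | rfl <;> assumption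
  refine ⟨key, ?_⟩
  intro S hS v _ hdeg
  have hle : indeg S v ≤ 1 := by
    apply Finset.card_le_one.mpr
    intro a ha b hb
    simp only [Finset.mem_filter] at ha hb
    obtain ⟨ha1, ha2⟩ := ha
    obtain ⟨hb1, hb2⟩ := hb
    rcases (key S).mp hS with rfl | rfl <;>
      simp only [Finset.mem_insert, Finset.mem_singleton] at ha1 hb1 <;>
      rcases ha1 with rfl | rfl | rfl <;> rcases hb1 with rfl | rfl | rfl <;>
      first
        | rfl
        | exact absurd (ha2.trans hb2.symm) (by assumption)
        | exact absurd (hb2.trans ha2.symm) (by assumption)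
  omega
end
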